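/- arXiv:0809.1688 — 8 statements merged into one kernel-verified Lean document; each statement's English description precedes it below -/
import Mathlib

section
/- Let p be a prime, r ≥ 1 an integer, n = p^r, and let q = p^e be a power of p with e ≥ 1, and moreover e ≥ 2 if p = 2. Let P be a Sylow p-subgroup of the symmetric group S_n. Then every subset Λ of X_n(q) that is invariant under P and generates X_n(q) as an abelian group has at least p^{2r−1} elements. -/
open Equiv Finset


abbrev Idx (p r : ℕ) := Fin r → ZMod p

def Tri {p r : ℕ} (σ : Equiv.Perm (Idx p r)) : Prop :=
  ∀ v w : Idx p r, ∀ k : Fin r, (∀ j : Fin r, k < j → v j = w j) →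
    σ v k - v k = σ w k - w k

theorem tri_one {p r : ℕ} : Tri (1 : Perm (Idx p r)) := by
  intro v w k h; simp

theorem tri_agree {p r : ℕ} {σ : Perm (Idx p r)} (hσ : Tri σ) {v w : Idx p r} {k : Fin r}
    (h : ∀ j, k < j → v j = w j) : ∀ j, k < j → σ v j = σ w j := by
  intro j hj
  have h2 : ∀ j', j < j' → v j' = w j' := fun j' hj' => h j' (lt_trans hj hj')
  have h3 := hσ v w j h2
  rw [h j hj] at h3
  exact sub_left_inj.mp h3

theorem tri_mul {p r : ℕ} {σ τ : Perm (Idx p r)} (hσ : Tri σ) (hτ : Tri τ) :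
    Tri (σ * τ) := by
  intro v w k h
  have h1 := hτ v w k h
  have h2 := hσ (τ v) (τ w) k (tri_agree hτ h)
  simp only [Perm.mul_apply]
  linear_combination h1 + h2

theorem tri_pow {p r : ℕ} {σ : Perm (Idx p r)} (hσ : Tri σ) (n : ℕ) : Tri (σ ^ n) := by
  induction n with
  | zero => simpa using tri_one
  | succ n ih => rw [pow_succ]; exact tri_mul ih hσ

def TriS (p r : ℕ) : Set (Perm (Idx p r)) := {σ | Tri σ ∧ Tri σ⁻¹}

def Wgrp (p r : ℕ) : Subgroup (Perm (Idx p r)) := Subgroup.closure (TriS p r)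

theorem tri_of_mem_W {p r : ℕ} {σ : Perm (Idx p r)} (h : σ ∈ Wgrp p r) : Tri σ := by
  have h' : σ ∈ Submonoid.closure (TriS p r ∪ (TriS p r)⁻¹) := by
    rw [← Subgroup.closure_toSubmonoid]; exact h
  clear h
  induction h' using Submonoid.closure_induction with
  | mem x hx =>
    rcases hx with hx | hx
    · exact hx.1
    · have hx' : x⁻¹ ∈ TriS p r := Set.mem_inv.mp hx
      simpa using hx'.2
  | one => exact tri_one
  | mul x y _ _ hx hy => exact tri_mul hx hy
section
variable {p r : ℕ}

theorem tri_pow_card {σ : Perm (Idx p r)} (hσ : Tri σ) : σ ^ (p ^ r) = 1 := by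
  have H : ∀ m, ∀ (v : Idx p r) (j : Fin r), r - m ≤ (j : ℕ) → (σ ^ (p ^ m)) v j = v j := by
    intro m
    induction m with
    | zero =>
      intro v j hj
      exact absurd hj (by have := j.isLt; omega)
    | succ m IH =>
      intro v j hj
      have hTφ : Tri (σ ^ (p ^ m)) := tri_pow hσ _
      have hmul : σ ^ (p ^ (m + 1)) = (σ ^ (p ^ m)) ^ p := by
        rw [← pow_mul, pow_succ]
      rw [hmul]
      set φ := σ ^ (p ^ m) with hφ
      by_cases hj2 : r - m ≤ (j : ℕ)
      · have hfix : ∀ (i : ℕ) (w : Idx p r), (φ ^ i) w j = w j := by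
          intro i
          induction i with
          | zero => intro w; simp
          | succ i ih =>
            intro w
            rw [pow_succ, Perm.mul_apply, ih (φ w)]
            exact IH w j hj2
        exact hfix p v
      · have key : ∀ (i : ℕ), ((φ ^ i) v j = v j + i • (φ v j - v j)) ∧
            (∀ j' : Fin r, j < j' → (φ ^ i) v j' = v j') := by
          intro i
          induction i with
          | zero => exact ⟨by simp, fun j' _ => by simp⟩
          | succ i ih =>
            obtain ⟨ih1, ih2⟩ := ih
            have hstep : ∀ j' : Fin r, j < j' → r - m ≤ (j' : ℕ) := by
              intro j' hj'
              have h1 : (j : ℕ) < (j' : ℕ) := hj'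
              omega
            constructor
            · have hT := hTφ ((φ ^ i) v) v j (fun j' hj' => ih2 j' hj')
              have ha := eq_add_of_sub_eq hT
              rw [ih1] at ha
              rw [pow_succ', Perm.mul_apply, ha, succ_nsmul]
              abel
            · intro j' hj'
              rw [pow_succ', Perm.mul_apply, IH ((φ ^ i) v) j' (hstep j' hj'),
                ih2 j' hj']
        obtain ⟨k1, _⟩ := key p
        rw [k1]
        have hz : (p : ℕ) • ((φ v j) - v j) = 0 := by
          simp [nsmul_eq_mul, ZMod.natCast_self]
        rw [hz, add_zero]
  ext v : 1
  funext j
  have := H r v j (by omega)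
  simpa using this

theorem isPGroup_W (p r : ℕ) : IsPGroup p (Wgrp p r) := by
  intro g
  exact ⟨r, Subtype.ext (by
    have : (g : Perm (Idx p r)) ^ (p ^ r) = 1 := tri_pow_card (tri_of_mem_W g.2)
    push_cast
    simpa using this)⟩

end
section
variable {p r : ℕ}

def rotP (f : Idx p r → ZMod p) : Perm (Idx p (r + 1)) where
  toFun v := Fin.cons (v 0 + f (Fin.tail v)) (Fin.tail v)
  invFun v := Fin.cons (v 0 - f (Fin.tail v)) (Fin.tail v)
  left_inv v := by
    simp [Fin.tail_cons, Fin.cons_zero, Fin.cons_self_tail]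
  right_inv v := by
    simp [Fin.tail_cons, Fin.cons_zero, Fin.cons_self_tail]

theorem rotP_apply (f : Idx p r → ZMod p) (v : Idx p (r+1)) :
    rotP f v = Fin.cons (v 0 + f (Fin.tail v)) (Fin.tail v) := rfl

theorem rotP_apply_cons (f : Idx p r → ZMod p) (x : ZMod p) (u : Idx p r) :
    rotP f (Fin.cons x u) = Fin.cons (x + f u) u := by
  rw [rotP_apply, Fin.tail_cons, Fin.cons_zero]

theorem rotP_inv (f : Idx p r → ZMod p) : (rotP f)⁻¹ = rotP (-f) := by
  ext v : 1
  show Fin.cons (v 0 - f (Fin.tail v)) (Fin.tail v)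
      = Fin.cons (v 0 + (-f) (Fin.tail v)) (Fin.tail v)
  rw [Pi.neg_apply, sub_eq_add_neg]

theorem tri_rotP (f : Idx p r → ZMod p) : Tri (rotP f) := by
  intro v w k h
  induction k using Fin.cases with
  | zero =>
    have htl : Fin.tail v = Fin.tail w := by
      funext i
      exact h i.succ (Fin.succ_pos i)
    rw [rotP_apply, rotP_apply, Fin.cons_zero, Fin.cons_zero, htl]
    ring
  | succ k' =>
    rw [rotP_apply, rotP_apply, Fin.cons_succ, Fin.cons_succ]
    show v k'.succ - v k'.succ = w k'.succ - w k'.succ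
    simp

theorem rotP_mem (f : Idx p r → ZMod p) : rotP f ∈ Wgrp p (r + 1) := by
  apply Subgroup.subset_closure
  exact ⟨tri_rotP f, by rw [rotP_inv]; exact tri_rotP (-f)⟩

def liftP (σ : Perm (Idx p r)) : Perm (Idx p (r + 1)) where
  toFun v := Fin.cons (v 0) (σ (Fin.tail v))
  invFun v := Fin.cons (v 0) (σ⁻¹ (Fin.tail v))
  left_inv v := by
    simp [Fin.tail_cons, Fin.cons_zero, Fin.cons_self_tail]
  right_inv v := by
    simp [Fin.tail_cons, Fin.cons_zero, Fin.cons_self_tail]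

theorem liftP_apply (σ : Perm (Idx p r)) (v : Idx p (r+1)) :
    liftP σ v = Fin.cons (v 0) (σ (Fin.tail v)) := rfl

theorem liftP_apply_cons (σ : Perm (Idx p r)) (x : ZMod p) (u : Idx p r) :
    liftP σ (Fin.cons x u) = Fin.cons x (σ u) := by
  rw [liftP_apply, Fin.tail_cons, Fin.cons_zero]

def liftHom : Perm (Idx p r) →* Perm (Idx p (r + 1)) where
  toFun := liftP
  map_one' := by
    ext v : 1
    show Fin.cons (v 0) ((1 : Perm (Idx p r)) (Fin.tail v)) = v
    simp [Fin.cons_self_tail]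
  map_mul' σ τ := by
    ext v : 1
    show Fin.cons (v 0) ((σ * τ) (Fin.tail v)) = liftP σ (liftP τ v)
    show Fin.cons (v 0) (σ (τ (Fin.tail v)))
        = liftP σ (Fin.cons (v 0) (τ (Fin.tail v)))
    rw [liftP_apply_cons]

theorem tri_liftP {σ : Perm (Idx p r)} (hσ : Tri σ) : Tri (liftP σ) := by
  intro v w k h
  induction k using Fin.cases with
  | zero =>
    rw [liftP_apply, liftP_apply, Fin.cons_zero, Fin.cons_zero]
    simp
  | succ k' =>
    have htl : ∀ j : Fin r, k' < j → Fin.tail v j = Fin.tail w j := by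
      intro j hj
      exact h j.succ (by rwa [Fin.succ_lt_succ_iff])
    have hh := hσ (Fin.tail v) (Fin.tail w) k' htl
    rw [liftP_apply, liftP_apply, Fin.cons_succ, Fin.cons_succ]
    exact hh

theorem liftP_mem {σ : Perm (Idx p r)} (hσ : σ ∈ Wgrp p r) :
    liftP σ ∈ Wgrp p (r + 1) := by
  have hle : Wgrp p r ≤ (Wgrp p (r + 1)).comap (liftHom (p := p) (r := r)) := by
    rw [Wgrp, Subgroup.closure_le]
    intro τ hτ
    refine Subgroup.subset_closure ⟨tri_liftP hτ.1, ?_⟩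
    have : (liftHom τ)⁻¹ = liftHom τ⁻¹ := by rw [← map_inv]
    show Tri (liftHom τ)⁻¹
    rw [this]
    exact tri_liftP hτ.2
  exact hle hσ

end
section
set_option linter.unusedSectionVars false
variable (p c r : ℕ) [NeZero p]

instance : NeZero (p ^ c) := ⟨pow_ne_zero c (NeZero.ne p)⟩

/-- the additive subgroup `p · Z/p^c`. -/
def PRs : AddSubgroup (ZMod (p ^ c)) := (AddMonoidHom.mulLeft (p : ZMod (p ^ c))).range

theorem mem_PRs_iff (x : ZMod (p ^ c)) :
    x ∈ PRs p c ↔ ∃ w, (p : ZMod (p ^ c)) * w = x := Iff.rfl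

theorem one_not_mem_PRs (hp : p.Prime) (hc : 1 ≤ c) : (1 : ZMod (p ^ c)) ∉ PRs p c := by
  rintro ⟨w, hw⟩
  change (p : ZMod (p ^ c)) * w = 1 at hw
  have h0 : ((p ^ c : ℕ) : ZMod (p ^ c)) = 0 := ZMod.natCast_self _
  have h1 : ((p ^ (c - 1) : ℕ) : ZMod (p ^ c)) = 0 := by
    calc ((p ^ (c - 1) : ℕ) : ZMod (p ^ c)) = (p : ZMod (p ^ c)) ^ (c - 1) * 1 := by push_cast; ring
    _ = (p : ZMod (p ^ c)) ^ (c - 1) * ((p : ZMod (p ^ c)) * w) := by rw [hw]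
    _ = ((p ^ c : ℕ) : ZMod (p ^ c)) * w := by
        push_cast
        rw [← mul_assoc, ← pow_succ]
        congr 2
        omega
    _ = 0 := by rw [h0, zero_mul]
  rw [ZMod.natCast_eq_zero_iff] at h1
  have := Nat.le_of_dvd (pow_pos hp.pos _) h1
  have := Nat.pow_lt_pow_right hp.one_lt (show c - 1 < c by omega)
  omega

/-- the set of `p`-multiples of sum-zero vectors -/
def Dset : Set (Idx p r → ZMod (p ^ c)) :=
  {x | ∃ b : Idx p r → ZMod (p ^ c), (∑ u, b u = 0) ∧ ∀ u, x u = (p : ZMod (p ^ c)) * b u}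

def Dsub : AddSubgroup (Idx p r → ZMod (p ^ c)) where
  carrier := Dset p c r
  zero_mem' := ⟨0, by simp, by simp⟩
  add_mem' := by
    rintro x y ⟨b, hb, hxb⟩ ⟨b', hb', hyb⟩
    exact ⟨b + b', by simp only [Pi.add_apply]; rw [Finset.sum_add_distrib, hb, hb', add_zero],
      fun u => by simp [hxb u, hyb u, mul_add]⟩
  neg_mem' := by
    rintro x ⟨b, hb, hxb⟩
    exact ⟨-b, by simp [hb], fun u => by simp [hxb u]⟩

theorem Dset_comp_perm {x : Idx p r → ZMod (p ^ c)} (hx : x ∈ Dset p c r)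
    (σ : Perm (Idx p r)) : x ∘ σ ∈ Dset p c r := by
  obtain ⟨b, hb, hxb⟩ := hx
  exact ⟨b ∘ σ, by rw [← hb]; exact Equiv.sum_comp σ b, fun u => hxb (σ u)⟩

/-- block-summing map -/
def sHom : (Idx p (r + 1) → ZMod (p ^ c)) →+ (Idx p r → ZMod (p ^ c)) :=
  AddMonoidHom.mk' (fun a => fun u => ∑ x : ZMod p, a (Fin.cons x u))
    (by intro a b; funext u; simp [Finset.sum_add_distrib])

theorem sHom_apply (a : Idx p (r + 1) → ZMod (p ^ c)) (u : Idx p r) :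
    sHom p c r a u = ∑ x : ZMod p, a (Fin.cons x u) := rfl

theorem sum_split (a : Idx p (r + 1) → ZMod (p ^ c)) :
    ∑ v, a v = ∑ u : Idx p r, ∑ x : ZMod p, a (Fin.cons x u) := by
  rw [← Equiv.sum_comp (Fin.consEquiv (fun _ : Fin (r+1) => ZMod p)) a]
  rw [Fintype.sum_prod_type]
  rw [Finset.sum_comm]
  rfl

theorem sum_sHom (a : Idx p (r + 1) → ZMod (p ^ c)) :
    ∑ u, sHom p c r a u = ∑ v, a v := by
  rw [sum_split]; rfl

end
section
set_option linter.unusedSectionVars false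
variable {p c r : ℕ} [NeZero p]

theorem const_of_period (hp : p.Prime) {β : Type*} (g : ZMod p → β) (d : ZMod p)
    (hd : d ≠ 0) (hper : ∀ x, g (x + d) = g x) : ∀ x y, g x = g y := by
  haveI : Fact p.Prime := ⟨hp⟩
  have hn : ∀ (k : ℕ) (x : ZMod p), g (x + k • d) = g x := by
    intro k
    induction k with
    | zero => intro x; simp
    | succ k ih =>
      intro x
      rw [succ_nsmul, ← add_assoc, hper (x + k • d), ih x]
  have key : ∀ x y : ZMod p, g x = g y → True := fun _ _ _ => trivial
  intro x y
  have hk : ∃ k : ℕ, (k : ZMod p) = (y - x) * d⁻¹ := ZMod.natCast_zmod_surjective _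
  obtain ⟨k, hkk⟩ := hk
  have : x + k • d = y := by
    rw [nsmul_eq_mul, hkk, mul_assoc, inv_mul_cancel₀ hd, mul_one]
    ring
  rw [← this, hn k x]

theorem sHom_mem_PRs_of_const (a : Idx p (r + 1) → ZMod (p ^ c)) (u : Idx p r)
    (hconst : ∀ x y : ZMod p, a (Fin.cons x u) = a (Fin.cons y u)) :
    sHom p c r a u ∈ PRs p c := by
  rw [sHom_apply]
  have : ∀ x : ZMod p, a (Fin.cons x u) = a (Fin.cons 0 u) := fun x => hconst x 0
  rw [Finset.sum_congr rfl (fun x _ => this x), Finset.sum_const]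
  rw [Finset.card_univ, ZMod.card p, nsmul_eq_mul]
  exact ⟨a (Fin.cons 0 u), rfl⟩

theorem mem_Dset_of_all_PRs (t : Idx p r → ZMod (p ^ c)) (ht : ∑ u, t u = 0)
    (hall : ∀ u, t u ∈ PRs p c) : t ∈ Dset p c r := by
  choose w hw' using hall
  have hw : ∀ u, (p : ZMod (p ^ c)) * w u = t u := hw'
  obtain ⟨u₀⟩ : Nonempty (Idx p r) := inferInstance
  classical
  have hpz : (p : ZMod (p ^ c)) * (∑ u, w u) = 0 := by
    rw [Finset.mul_sum]
    rw [Finset.sum_congr rfl (fun u _ => hw u)]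
    exact ht
  refine ⟨fun u => w u - (if u = u₀ then (∑ u', w u') else 0), ?_, ?_⟩
  · rw [Finset.sum_sub_distrib]
    rw [Finset.sum_ite_eq' Finset.univ u₀ (fun _ => ∑ u', w u')]
    simp
  · intro u
    rw [mul_sub]
    by_cases h : u = u₀
    · rw [if_pos h, hpz, sub_zero, hw u]
    · rw [if_neg h, mul_zero, sub_zero, hw u]

theorem exists_second (t : Idx p r → ZMod (p ^ c)) (ht : ∑ u, t u = 0)
    (u₁ : Idx p r) (h1 : t u₁ ∉ PRs p c) :
    ∃ u₂, u₂ ≠ u₁ ∧ t u₂ ∉ PRs p c := by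
  by_contra hcon
  push_neg at hcon
  classical
  have hsum : ∑ u ∈ Finset.univ.erase u₁, t u ∈ PRs p c := by
    apply AddSubgroup.sum_mem
    intro u hu
    exact hcon u (Finset.ne_of_mem_erase hu)
  have : t u₁ + ∑ u ∈ Finset.univ.erase u₁, t u = 0 := by
    rw [Finset.add_sum_erase _ _ (Finset.mem_univ u₁)]
    exact ht
  have : t u₁ = -(∑ u ∈ Finset.univ.erase u₁, t u) := by linear_combination this
  rw [this] at h1
  exact h1 (AddSubgroup.neg_mem _ hsum)

theorem sHom_mem_Dset {x : Idx p (r + 1) → ZMod (p ^ c)} (hx : x ∈ Dset p c (r + 1)) :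
    sHom p c r x ∈ Dset p c r := by
  obtain ⟨b, hb, hxb⟩ := hx
  refine ⟨sHom p c r b, by rw [sum_sHom]; exact hb, ?_⟩
  intro u
  rw [sHom_apply, sHom_apply, Finset.mul_sum]
  exact Finset.sum_congr rfl (fun x' _ => hxb _)

theorem sHom_comp_rot (a : Idx p (r + 1) → ZMod (p ^ c)) (f : Idx p r → ZMod p) :
    sHom p c r (a ∘ (rotP f)) = sHom p c r a := by
  funext u
  rw [sHom_apply, sHom_apply]
  have h1 : ∀ x : ZMod p, (a ∘ rotP f) (Fin.cons x u) = a (Fin.cons (x + f u) u) := by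
    intro x
    simp only [Function.comp_apply, rotP_apply_cons]
  rw [Finset.sum_congr rfl (fun x _ => h1 x)]
  exact Fintype.sum_equiv (Equiv.addRight (f u)) _ _ (fun x => rfl)

theorem sHom_comp_lift (a : Idx p (r + 1) → ZMod (p ^ c)) (τ : Perm (Idx p r)) :
    sHom p c r (a ∘ (liftP τ)) = (sHom p c r a) ∘ τ := by
  funext u
  rw [Function.comp_apply, sHom_apply, sHom_apply]
  apply Finset.sum_congr rfl
  intro x _
  simp only [Function.comp_apply, liftP_apply_cons]

theorem const_block_of_rot_eq (hp : p.Prime) (a : Idx p (r + 1) → ZMod (p ^ c))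
    {f₁ f₂ : Idx p r → ZMod p} (heq : a ∘ rotP f₁ = a ∘ rotP f₂) (u : Idx p r)
    (hne : f₁ u ≠ f₂ u) : ∀ x y : ZMod p, a (Fin.cons x u) = a (Fin.cons y u) := by
  have key : ∀ y : ZMod p, a (Fin.cons (y + (f₂ u - f₁ u)) u) = a (Fin.cons y u) := by
    intro y
    have h1 := congrFun heq (Fin.cons (y - f₁ u) u)
    simp only [Function.comp_apply, rotP_apply_cons] at h1
    have e1 : y - f₁ u + f₁ u = y := by ring
    have e2 : y - f₁ u + f₂ u = y + (f₂ u - f₁ u) := by ring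
    rw [e1, e2] at h1
    exact h1.symm
  exact const_of_period hp (fun x => a (Fin.cons x u)) _ (by
    intro h0; apply hne; linear_combination -h0) key
end
section
set_option linter.unusedSectionVars false
set_option maxHeartbeats 1000000
variable {p c : ℕ} [NeZero p]

theorem key_base (hp : p.Prime) (hc1 : 1 ≤ c) (hc2 : p = 2 → c = 2)
    (S : Set (Idx p 1 → ZMod (p ^ c)))
    (hSsub : ∀ a ∈ S, ∑ v, a v = 0)
    (hSinv : ∀ σ ∈ Wgrp p 1, ∀ a ∈ S, a ∘ ⇑σ ∈ S)
    (hSgen : {a : Idx p 1 → ZMod (p ^ c) | ∑ v, a v = 0} ⊆ (AddSubgroup.closure S : Set _)) :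
    p ≤ (S \ Dset p c 1).ncard := by
  haveI : Fact p.Prime := ⟨hp⟩
  classical
  by_cases hA : ∃ a ∈ S \ Dset p c 1, ∃ v w : Idx p 1, a v ≠ a w
  · obtain ⟨a, haSD, v0, w0, hvw⟩ := hA
    have hmem : ∀ i : ZMod p, (a ∘ ⇑(rotP (fun _ => i))) ∈ S \ Dset p c 1 := by
      intro i
      constructor
      · exact hSinv _ (rotP_mem _) a haSD.1
      · intro hD
        apply haSD.2
        have : (a ∘ ⇑(rotP (fun _ => i))) ∘ ⇑(rotP (fun _ => i))⁻¹ = a := by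
          funext x
          simp [Perm.coe_inv]
        rw [← this]
        exact Dset_comp_perm p c 1 hD _
    have hinj : Function.Injective
        (fun i : ZMod p => (⟨a ∘ ⇑(rotP (fun _ => i)), hmem i⟩ : ↥(S \ Dset p c 1))) := by
      intro i j hij
      by_contra hne
      have heq : a ∘ ⇑(rotP (fun _ : Idx p 0 => i)) = a ∘ ⇑(rotP (fun _ : Idx p 0 => j)) :=
        congrArg Subtype.val hij
      have hconst := const_block_of_rot_eq hp a heq default hne
      apply hvw
      have hform : ∀ z : Idx p 1, z = Fin.cons (z 0) (default : Idx p 0) := by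
        intro z
        funext j
        induction j using Fin.cases with
        | zero => rw [Fin.cons_zero]
        | succ j' => exact j'.elim0
      rw [hform v0, hform w0]
      exact hconst _ _
    have hcard := Nat.card_le_card_of_injective _ hinj
    rw [Nat.card_zmod] at hcard
    rwa [Nat.card_coe_set_eq] at hcard
  · push_neg at hA
    exfalso
    -- all elements of S \ D are constant
    set K0 : AddSubgroup (Idx p 1 → ZMod (p ^ c)) :=
      { carrier := {x | ∀ v w, x v = x w}
        zero_mem' := by intro v w; rfl
        add_mem' := by intro x y hx hy v w; simp [hx v w, hy v w]
        neg_mem' := by intro x hx v w; simp [hx v w] } with hK0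
    have hSJ : S ⊆ ↑(K0 ⊔ Dsub p c 1) := by
      intro a haS
      by_cases hD : a ∈ Dset p c 1
      · exact AddSubgroup.mem_sup_right hD
      · exact AddSubgroup.mem_sup_left (hA a ⟨haS, hD⟩)
    have hMJ : {x : Idx p 1 → ZMod (p ^ c) | ∑ v, x v = 0} ⊆ ↑(K0 ⊔ Dsub p c 1) := by
      intro x hx
      have := hSgen hx
      have hle : AddSubgroup.closure S ≤ K0 ⊔ Dsub p c 1 := AddSubgroup.closure_le _ |>.mpr hSJ
      exact hle this
    set v₀ : Idx p 1 := fun _ => 0 with hv₀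
    set v₁ : Idx p 1 := fun _ => 1 with hv₁
    have hv01 : v₀ ≠ v₁ := by
      intro h
      have h0 := congrFun h 0
      simp [hv₀, hv₁] at h0
    set m : Idx p 1 → ZMod (p ^ c) :=
      fun v => (if v = v₀ then 1 else 0) - (if v = v₁ then 1 else 0) with hm
    have hmsum : ∑ v, m v = 0 := by
      rw [hm]
      simp [Finset.sum_sub_distrib, Finset.sum_ite_eq' Finset.univ]
    have hmJ : m ∈ K0 ⊔ Dsub p c 1 := hMJ hmsum
    rw [AddSubgroup.mem_sup] at hmJ
    obtain ⟨x, hx, y, hy, hxy⟩ := hmJ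
    obtain ⟨b, hb, hyb⟩ := hy
    set k := x v₀ with hk
    have hxconst : ∀ v, x v = k := fun v => hx v v₀
    have heval : ∀ v, x v + y v = m v := fun v => congrFun hxy v
    have hm0 : m v₀ = 1 := by simp [hm, hv01]
    have h1 : (1 : ZMod (p ^ c)) = k + (p : ZMod (p ^ c)) * b v₀ := by
      have heq := heval v₀
      rw [hxconst v₀, hyb v₀, hm0] at heq
      exact heq.symm
    have hkPR : k ∈ PRs p c := by
      by_cases hp2 : p = 2
      · -- p = 2, c = 2 : use the sum to get (p : R) * k = 0
        have hc2' := hc2 hp2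
        have hxsum : ∑ v, x v = (p : ZMod (p ^ c)) * k := by
          rw [Finset.sum_congr rfl (fun v _ => hxconst v), Finset.sum_const,
            Finset.card_univ]
          have hcard : Fintype.card (Idx p 1) = p := by
            rw [Fintype.card_fun]
            simp [ZMod.card]
          rw [hcard, nsmul_eq_mul]
        have hysum : ∑ v, y v = 0 := by
          rw [Finset.sum_congr rfl (fun v _ => hyb v), ← Finset.mul_sum, hb, mul_zero]
        have hpk : (p : ZMod (p ^ c)) * k = 0 := by
          have : ∑ v, (x v + y v) = ∑ v, m v := Finset.sum_congr rfl (fun v _ => by rw [heval v])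
          rw [Finset.sum_add_distrib, hxsum, hysum, add_zero, hmsum] at this
          exact this
        subst hp2 hc2'
        revert hpk
        have hdec : ∀ k' : ZMod (2 ^ 2), (2 : ZMod (2 ^ 2)) * k' = 0 →
            ∃ w, (2 : ZMod (2 ^ 2)) * w = k' := by decide
        intro hpk
        obtain ⟨w, hw⟩ := hdec k (by exact_mod_cast hpk)
        exact ⟨w, hw⟩
      · -- p ≥ 3 : use a third coordinate
        have hp3 : 3 ≤ p := by
          rcases hp.two_le.lt_or_eq with h | h
          · omega
          · omega
        set v₂ : Idx p 1 := fun _ => 2 with hv₂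
        have h20 : (2 : ZMod p) ≠ 0 := by
          intro h
          have : ((2 : ℕ) : ZMod p) = 0 := by exact_mod_cast h
          rw [ZMod.natCast_eq_zero_iff] at this
          have := Nat.le_of_dvd (by norm_num) this
          omega
        have h21 : (2 : ZMod p) ≠ 1 := by
          intro h
          have : (1 : ZMod p) = 0 := by linear_combination h
          exact one_ne_zero this
        have hv20 : v₂ ≠ v₀ := by
          intro h; exact h20 (congrFun h 0)
        have hv21 : v₂ ≠ v₁ := by
          intro h; exact h21 (congrFun h 0)
        have hm2 : m v₂ = 0 := by simp [hm, hv20, hv21]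
        have h0 : k + (p : ZMod (p ^ c)) * b v₂ = 0 := by
          have heq := heval v₂
          rwa [hxconst v₂, hyb v₂, hm2] at heq
        have hkneg : k = -((p : ZMod (p ^ c)) * b v₂) := eq_neg_of_add_eq_zero_left h0
        rw [hkneg]
        exact AddSubgroup.neg_mem _ ⟨b v₂, rfl⟩
    have h1PR : (1 : ZMod (p ^ c)) ∈ PRs p c := by
      rw [h1]
      exact AddSubgroup.add_mem _ hkPR ⟨b v₀, rfl⟩
    exact one_not_mem_PRs p c hp hc1 h1PR

end
section
set_option linter.unusedSectionVars false
set_option maxHeartbeats 1000000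
variable {p c : ℕ} [NeZero p]

theorem key_step (hp : p.Prime) (r : ℕ) (hr : 1 ≤ r)
    (IH : ∀ S : Set (Idx p r → ZMod (p ^ c)),
      (∀ a ∈ S, ∑ v, a v = 0) →
      (∀ σ ∈ Wgrp p r, ∀ a ∈ S, a ∘ ⇑σ ∈ S) →
      ({a : Idx p r → ZMod (p ^ c) | ∑ v, a v = 0} ⊆ (AddSubgroup.closure S : Set _)) →
      p ^ (2 * r - 1) ≤ (S \ Dset p c r).ncard)
    (S : Set (Idx p (r + 1) → ZMod (p ^ c)))
    (hSsub : ∀ a ∈ S, ∑ v, a v = 0)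
    (hSinv : ∀ σ ∈ Wgrp p (r + 1), ∀ a ∈ S, a ∘ ⇑σ ∈ S)
    (hSgen : {a : Idx p (r + 1) → ZMod (p ^ c) | ∑ v, a v = 0} ⊆
      (AddSubgroup.closure S : Set _)) :
    p ^ (2 * (r + 1) - 1) ≤ (S \ Dset p c (r + 1)).ncard := by
  classical
  set T : Set (Idx p r → ZMod (p ^ c)) := ⇑(sHom p c r) '' S with hT
  have hT1 : ∀ t ∈ T, ∑ u, t u = 0 := by
    rintro t ⟨a, haS, rfl⟩
    rw [sum_sHom]
    exact hSsub a haS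
  have hT2 : ∀ τ ∈ Wgrp p r, ∀ t ∈ T, t ∘ ⇑τ ∈ T := by
    rintro τ hτ t ⟨a, haS, rfl⟩
    refine ⟨a ∘ ⇑(liftP τ), hSinv _ (liftP_mem hτ) a haS, ?_⟩
    rw [sHom_comp_lift]
  have hT3 : {x : Idx p r → ZMod (p ^ c) | ∑ u, x u = 0} ⊆
      (AddSubgroup.closure T : Set _) := by
    intro x hx
    set a : Idx p (r + 1) → ZMod (p ^ c) :=
      fun v => if v 0 = 0 then x (Fin.tail v) else 0 with ha
    have haU : sHom p c r a = x := by
      funext u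
      rw [sHom_apply]
      have : ∀ y : ZMod p, a (Fin.cons y u) = if y = 0 then x u else 0 := by
        intro y
        rw [ha]
        simp only [Fin.cons_zero, Fin.tail_cons]
      rw [Finset.sum_congr rfl (fun y _ => this y)]
      simp [Finset.sum_ite_eq' Finset.univ]
    have haM : ∑ v, a v = 0 := by
      rw [← sum_sHom, haU]
      exact hx
    have haC : a ∈ (AddSubgroup.closure S : Set _) := hSgen haM
    have hmap : (AddSubgroup.closure S).map (sHom p c r) = AddSubgroup.closure T := by
      rw [hT, AddMonoidHom.map_closure]
    have : sHom p c r a ∈ (AddSubgroup.closure S).map (sHom p c r) :=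
      ⟨a, haC, rfl⟩
    rw [hmap, haU] at this
    exact this
  have hTcard : p ^ (2 * r - 1) ≤ (T \ Dset p c r).ncard := IH T hT1 hT2 hT3
  -- now build injection
  have hGex : ∀ t : ↥(T \ Dset p c r), ∃ G : ZMod p × ZMod p → ↥(S \ Dset p c (r + 1)),
      Function.Injective G ∧ ∀ ij, sHom p c r ((G ij) : Idx p (r + 1) → ZMod (p ^ c)) = (t : Idx p r → ZMod (p ^ c)) := by
    rintro ⟨t, htT, htD⟩
    obtain ⟨a, haS, haT⟩ := htT
    have htsum : ∑ u, t u = 0 := hT1 t ⟨a, haS, haT⟩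
    have hu1 : ∃ u, t u ∉ PRs p c := by
      by_contra hcon
      push_neg at hcon
      exact htD (mem_Dset_of_all_PRs t htsum hcon)
    obtain ⟨u₁, hu₁⟩ := hu1
    obtain ⟨u₂, hu21, hu₂⟩ := exists_second t htsum u₁ hu₁
    set f : ZMod p × ZMod p → (Idx p r → ZMod p) :=
      fun ij u => if u = u₁ then ij.1 else if u = u₂ then ij.2 else 0 with hf
    have hfu1 : ∀ ij, f ij u₁ = ij.1 := by intro ij; simp [hf]
    have hfu2 : ∀ ij, f ij u₂ = ij.2 := by intro ij; simp [hf, hu21]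
    have hmem : ∀ ij, (a ∘ ⇑(rotP (f ij))) ∈ S \ Dset p c (r + 1) := by
      intro ij
      constructor
      · exact hSinv _ (rotP_mem _) a haS
      · intro hD
        have := sHom_mem_Dset hD
        rw [sHom_comp_rot, haT] at this
        exact htD this
    have hs : ∀ ij, sHom p c r (a ∘ ⇑(rotP (f ij))) = t := by
      intro ij
      rw [sHom_comp_rot, haT]
    refine ⟨fun ij => ⟨a ∘ ⇑(rotP (f ij)), hmem ij⟩, ?_, fun ij => hs ij⟩
    intro ij kl hijkl
    have heq : a ∘ ⇑(rotP (f ij)) = a ∘ ⇑(rotP (f kl)) := congrArg Subtype.val hijkl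
    have h1 : ij.1 = kl.1 := by
      by_contra hne
      have hconst := const_block_of_rot_eq hp a heq u₁ (by rw [hfu1, hfu1]; exact hne)
      have := sHom_mem_PRs_of_const a u₁ hconst
      rw [haT] at this
      exact hu₁ this
    have h2 : ij.2 = kl.2 := by
      by_contra hne
      have hconst := const_block_of_rot_eq hp a heq u₂ (by rw [hfu2, hfu2]; exact hne)
      have := sHom_mem_PRs_of_const a u₂ hconst
      rw [haT] at this
      exact hu₂ this
    exact Prod.ext h1 h2
  choose G hGinj hGs using hGex
  set Φ : ↥(T \ Dset p c r) × (ZMod p × ZMod p) → ↥(S \ Dset p c (r + 1)) :=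
    fun x => G x.1 x.2 with hΦ
  have hΦinj : Function.Injective Φ := by
    rintro ⟨t1, ij1⟩ ⟨t2, ij2⟩ h12
    have hteq : t1 = t2 := by
      apply Subtype.ext
      rw [← hGs t1 ij1, ← hGs t2 ij2]
      rw [show G t1 ij1 = G t2 ij2 from h12]
    subst hteq
    have h2 := hGinj t1 h12
    exact Prod.ext rfl h2
  have hcard := Nat.card_le_card_of_injective Φ hΦinj
  rw [Nat.card_prod, Nat.card_prod, Nat.card_zmod] at hcard
  rw [Nat.card_coe_set_eq, Nat.card_coe_set_eq] at hcard
  have hexp : 2 * (r + 1) - 1 = (2 * r - 1) + 2 := by omega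
  rw [hexp, pow_add, pow_two]
  calc p ^ (2 * r - 1) * (p * p) ≤ (T \ Dset p c r).ncard * (p * p) :=
        Nat.mul_le_mul_right _ hTcard
    _ ≤ (S \ Dset p c (r + 1)).ncard := hcard

theorem key (hp : p.Prime) (hc1 : 1 ≤ c) (hc2 : p = 2 → c = 2) (r : ℕ) (hr : 1 ≤ r) :
    ∀ S : Set (Idx p r → ZMod (p ^ c)),
      (∀ a ∈ S, ∑ v, a v = 0) →
      (∀ σ ∈ Wgrp p r, ∀ a ∈ S, a ∘ ⇑σ ∈ S) →
      ({a : Idx p r → ZMod (p ^ c) | ∑ v, a v = 0} ⊆ (AddSubgroup.closure S : Set _)) →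
      p ^ (2 * r - 1) ≤ (S \ Dset p c r).ncard := by
  induction r, hr using Nat.le_induction with
  | base =>
    intro S h1 h2 h3
    have := key_base hp hc1 hc2 S h1 h2 h3
    simpa using this
  | succ r hr IH =>
    intro S h1 h2 h3
    exact key_step hp r hr IH S h1 h2 h3

end

open Pointwise in
set_option maxHeartbeats 1000000 in
/-- Let `p` be a prime, `r ≥ 1`, `n = p^r`, and `q = p^e` with `e ≥ 1`
(and `e ≥ 2` if `p = 2`).  Let `P` be a Sylow `p`-subgroup of `S_n`.  Every subset
`Λ` of `X_n(q) = {a ∈ (ℤ/qℤ)^n : ∑ aᵢ = 0}` that is invariant under the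
coordinate-permutation action of `P` and generates `X_n(q)` as an abelian group
has at least `p^(2r-1)` elements. -/
theorem stmt_0 (p r e n q : ℕ) (hp : p.Prime) (hr : 1 ≤ r) (he : 1 ≤ e)
    (he2 : p = 2 → 2 ≤ e) (hn : n = p ^ r) (hq : q = p ^ e)
    (P : Sylow p (Equiv.Perm (Fin n)))
    (Λ : Set (Fin n → ZMod q))
    (hΛsub : ∀ a ∈ Λ, ∑ i, a i = 0)
    (hΛinv : ∀ σ ∈ (P : Subgroup (Equiv.Perm (Fin n))),
      (fun a : Fin n → ZMod q => a ∘ ⇑σ⁻¹) '' Λ = Λ)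
    (hΛgen : (AddSubgroup.closure Λ : Set (Fin n → ZMod q)) =
      {a : Fin n → ZMod q | ∑ i, a i = 0}) :
    p ^ (2 * r - 1) ≤ Λ.ncard := by
  classical
  haveI hfp : Fact p.Prime := ⟨hp⟩
  haveI : NeZero p := ⟨hp.pos.ne'⟩
  subst hn hq
  haveI : NeZero (p ^ e) := ⟨pow_ne_zero e (NeZero.ne p)⟩
  set c : ℕ := if p = 2 then 2 else 1 with hcdef
  have hc1 : 1 ≤ c := by rw [hcdef]; split <;> norm_num
  have hc2 : p = 2 → c = 2 := by intro h2; rw [hcdef, if_pos h2]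
  have hce : c ≤ e := by
    rw [hcdef]
    split
    · exact he2 (by assumption)
    · exact he
  have hdvd : p ^ c ∣ p ^ e := pow_dvd_pow p hce
  set φ : ZMod (p ^ e) →+* ZMod (p ^ c) := ZMod.castHom hdvd (ZMod (p ^ c)) with hφ
  set Φ : (Fin (p ^ r) → ZMod (p ^ e)) →+ (Fin (p ^ r) → ZMod (p ^ c)) :=
    AddMonoidHom.mk' (fun a i => φ (a i)) (by
      intro a b; funext i; simp [map_add]) with hΦ
  set S₀ : Set (Fin (p ^ r) → ZMod (p ^ c)) := ⇑Φ '' Λ with hS₀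
  -- Λ is closed under composition with elements of P
  have hΛcomp : ∀ σ ∈ (P : Subgroup (Equiv.Perm (Fin (p ^ r)))), ∀ a ∈ Λ, a ∘ ⇑σ ∈ Λ := by
    intro σ hσ a ha
    have h1 := hΛinv σ⁻¹ (inv_mem hσ)
    rw [inv_inv] at h1
    rw [← h1]
    exact ⟨a, ha, rfl⟩
  have hS₀comp : ∀ σ ∈ (P : Subgroup (Equiv.Perm (Fin (p ^ r)))), ∀ b ∈ S₀, b ∘ ⇑σ ∈ S₀ := by
    rintro σ hσ b ⟨a, ha, rfl⟩
    exact ⟨a ∘ ⇑σ, hΛcomp σ hσ a ha, rfl⟩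
  have hS₀sum : ∀ b ∈ S₀, ∑ i, b i = 0 := by
    rintro b ⟨a, ha, rfl⟩
    have : ∑ i, φ (a i) = φ (∑ i, a i) := (map_sum φ a Finset.univ).symm
    show ∑ i, φ (a i) = 0
    rw [this, hΛsub a ha, map_zero]
  have hS₀gen : {b : Fin (p ^ r) → ZMod (p ^ c) | ∑ i, b i = 0} ⊆
      (AddSubgroup.closure S₀ : Set _) := by
    intro b hb
    have hι : 0 < p ^ r := pow_pos hp.pos r
    set i₀ : Fin (p ^ r) := ⟨0, hι⟩ with hi₀
    set a' : Fin (p ^ r) → ZMod (p ^ e) := fun i => ((b i).val : ZMod (p ^ e)) with ha'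
    have hφa' : ∀ i, φ (a' i) = b i := by
      intro i
      rw [ha']
      simp only [map_natCast]
      exact ZMod.natCast_zmod_val (b i)
    set σs : ZMod (p ^ e) := ∑ i, a' i with hσs
    have hφσs : φ σs = 0 := by
      rw [hσs, map_sum]
      rw [Finset.sum_congr rfl (fun i _ => hφa' i)]
      exact hb
    set a : Fin (p ^ r) → ZMod (p ^ e) := Function.update a' i₀ (a' i₀ - σs) with haa
    have hasum : ∑ i, a i = 0 := by
      rw [haa, Finset.sum_update_of_mem (Finset.mem_univ i₀)]
      have : ∑ i ∈ Finset.univ \ {i₀}, a' i = σs - a' i₀ := by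
        rw [hσs]
        have := Finset.sum_eq_sum_sdiff_singleton_add (Finset.mem_univ i₀) a'
        rw [this]
        ring
      rw [this]
      ring
    have hΦa : ⇑Φ a = b := by
      funext i
      show φ (a i) = b i
      by_cases hi : i = i₀
      · subst hi
        rw [haa, Function.update_self, map_sub, hφa' i₀, hφσs, sub_zero]
      · rw [haa, Function.update_of_ne hi]
        exact hφa' i
    have haΛ : a ∈ AddSubgroup.closure Λ := by
      have : a ∈ {x : Fin (p ^ r) → ZMod (p ^ e) | ∑ i, x i = 0} := hasum
      rwa [← hΛgen] at this
    have : ⇑Φ a ∈ (AddSubgroup.closure Λ).map Φ := ⟨a, haΛ, rfl⟩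
    rw [AddMonoidHom.map_closure] at this
    rw [← hS₀, hΦa] at this
    exact this
  -- transport the index type
  have hcard : Fintype.card (Idx p r) = p ^ r := by
    rw [Fintype.card_fun]
    simp [ZMod.card]
  set e' : Idx p r ≃ Fin (p ^ r) := Fintype.equivFinOfCardEq hcard with he'
  set E : Equiv.Perm (Idx p r) ≃* Equiv.Perm (Fin (p ^ r)) :=
    { toEquiv := e'.permCongr
      map_mul' := by
        intro σ τ
        ext x
        simp [Equiv.permCongr_apply] } with hE
  set Wn : Subgroup (Equiv.Perm (Fin (p ^ r))) := Subgroup.map E.toMonoidHom (Wgrp p r) with hWn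
  have hWnP : IsPGroup p Wn := (isPGroup_W p r).map E.toMonoidHom
  obtain ⟨Q, hWQ⟩ := hWnP.exists_le_sylow
  obtain ⟨g, hgQ⟩ := MulAction.exists_smul_eq (Equiv.Perm (Fin (p ^ r))) Q P
  have hconj : ∀ σ, σ ∈ Wn → g * σ * g⁻¹ ∈ (P : Subgroup (Equiv.Perm (Fin (p ^ r)))) := by
    intro σ hσ
    have h1 : σ ∈ (Q : Subgroup _) := hWQ hσ
    have h2 : MulAut.conj g • σ ∈ MulAut.conj g • (Q : Subgroup _) :=
      Subgroup.smul_mem_pointwise_smul σ _ _ h1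
    have h4 : ((g • Q : Sylow p _) : Subgroup (Equiv.Perm (Fin (p ^ r))))
        = MulAut.conj g • (Q : Subgroup (Equiv.Perm (Fin (p ^ r)))) :=
      Sylow.coe_subgroup_smul
    rw [hgQ] at h4
    rw [← h4] at h2
    simpa [MulAut.smul_def] using h2
  -- final transported set
  set eE : Idx p r ≃ Fin (p ^ r) := e'.trans (g : Equiv.Perm (Fin (p ^ r))) with heE
  have heeE : ∀ v, eE v = g (e' v) := fun _ => rfl
  set Ψ : (Fin (p ^ r) → ZMod (p ^ c)) →+ (Idx p r → ZMod (p ^ c)) :=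
    AddMonoidHom.mk' (fun b => b ∘ eE) (by intro x y; funext v; rfl) with hΨ
  set S : Set (Idx p r → ZMod (p ^ c)) := ⇑Ψ '' S₀ with hS
  have hSsum : ∀ b ∈ S, ∑ v, b v = 0 := by
    rintro b ⟨b₀, hb₀, rfl⟩
    show ∑ v, b₀ (eE v) = 0
    rw [Equiv.sum_comp eE b₀]
    exact hS₀sum b₀ hb₀
  have hSinv : ∀ σ ∈ Wgrp p r, ∀ b ∈ S, b ∘ ⇑σ ∈ S := by
    rintro σ hσ b ⟨b₀, hb₀, rfl⟩
    have hmem : (g * E σ * g⁻¹) ∈ (P : Subgroup _) := hconj (E σ) ⟨σ, hσ, rfl⟩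
    refine ⟨b₀ ∘ ⇑(g * E σ * g⁻¹), hS₀comp _ hmem b₀ hb₀, ?_⟩
    show (b₀ ∘ ⇑(g * E σ * g⁻¹)) ∘ eE = (b₀ ∘ eE) ∘ ⇑σ
    funext v
    show b₀ ((g * E σ * g⁻¹) (eE v)) = b₀ (eE (σ v))
    congr 1
    rw [heeE, heeE]
    simp only [Equiv.Perm.mul_apply, Equiv.Perm.coe_inv, Equiv.symm_apply_apply]
    congr 1
    show e'.permCongr σ (e' v) = e' (σ v)
    rw [Equiv.permCongr_apply, Equiv.symm_apply_apply]
  have hSgen : {b : Idx p r → ZMod (p ^ c) | ∑ v, b v = 0} ⊆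
      (AddSubgroup.closure S : Set _) := by
    intro x hx
    have hx0 : x ∘ eE.symm ∈ {b : Fin (p ^ r) → ZMod (p ^ c) | ∑ i, b i = 0} := by
      show ∑ i, x (eE.symm i) = 0
      rw [Equiv.sum_comp eE.symm x]
      exact hx
    have h1 : x ∘ eE.symm ∈ (AddSubgroup.closure S₀ : Set _) := hS₀gen hx0
    have h2 : ⇑Ψ (x ∘ eE.symm) ∈ (AddSubgroup.closure S₀).map Ψ := ⟨_, h1, rfl⟩
    rw [AddMonoidHom.map_closure] at h2
    have h3 : ⇑Ψ (x ∘ eE.symm) = x := by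
      funext v
      show x (eE.symm (eE v)) = x v
      rw [Equiv.symm_apply_apply]
    rw [h3] at h2
    exact h2
  have hkey := key hp hc1 hc2 r hr S hSsum hSinv hSgen
  -- cardinalities
  have h1 : (S \ Dset p c r).ncard ≤ S.ncard :=
    Set.ncard_le_ncard Set.diff_subset (Set.toFinite S)
  have h2 : S.ncard = S₀.ncard := by
    rw [hS]
    apply Set.ncard_image_of_injective
    intro x y hxy
    funext i
    have h := congrFun hxy (eE.symm i)
    have h' : x (eE (eE.symm i)) = y (eE (eE.symm i)) := h
    rwa [Equiv.apply_symm_apply] at h'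
  have h3 : S₀.ncard ≤ Λ.ncard := by
    rw [hS₀]
    exact Set.ncard_image_le (Set.toFinite Λ)
  omega
end

section
/- Let p be a prime, n a positive integer, and p^e the highest power of p dividing n (e = 0 is allowed). Let P be a Sylow p-subgroup of the symmetric group S_n. Then every subset Λ of X_n(p) that is invariant under P and generates X_n(p) as an abelian group has at least p^e·(n − p^e) elements. -/
open Finset

private lemma aux_pow_ge (M : ℕ) (hM : 2 ≤ M) : ∀ s : ℕ, 2 ≤ s → M ^ 2 * (s - 1) ≤ M ^ s := by
  intro s hs
  induction s, hs using Nat.le_induction with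
  | base => simp
  | succ s hs ih =>
    have h2 : s ≤ 2 * (s - 1) := by omega
    calc M ^ 2 * (s + 1 - 1) = M ^ 2 * s := by simp
      _ ≤ M ^ 2 * (2 * (s - 1)) := Nat.mul_le_mul_left _ h2
      _ = 2 * (M ^ 2 * (s - 1)) := by ring
      _ ≤ 2 * M ^ s := Nat.mul_le_mul_left _ ih
      _ ≤ M * M ^ s := Nat.mul_le_mul_right _ hM
      _ = M ^ (s + 1) := by rw [pow_succ]; ring

private lemma aux_translate_sum {p e : ℕ} [Fact p.Prime] (f : (Fin e → ZMod p) → ZMod p)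
    (δ : Fin e → ZMod p) (hδ : δ ≠ 0) (hf : ∀ d, f (d + δ) = f d) :
    ∑ d, f d = 0 := by
  classical
  haveI : NeZero p := ⟨(Fact.out : p.Prime).ne_zero⟩
  obtain ⟨i₀, hi₀⟩ : ∃ i, δ i ≠ 0 := by
    by_contra h
    push_neg at h
    exact hδ (funext h)
  have hnat : ∀ (j : ℕ) (d : Fin e → ZMod p), f (d + j • δ) = f d := by
    intro j
    induction j with
    | zero => simp
    | succ j ih => intro d; rw [succ_nsmul, ← add_assoc, hf, ih]
  have hmul : ∀ (c : ZMod p) (d : Fin e → ZMod p), f (d + c • δ) = f d := by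
    intro c d
    have hc : c • δ = (c.val : ZMod p) • δ := by rw [ZMod.natCast_val, ZMod.cast_id]
    rw [hc, Nat.cast_smul_eq_nsmul, hnat]
  set D₀ := {d : Fin e → ZMod p // d i₀ = 0} with hD₀
  have hbij : Function.Bijective (fun cd : ZMod p × D₀ => cd.2.1 + cd.1 • δ) := by
    constructor
    · rintro ⟨c, d⟩ ⟨c', d'⟩ h
      simp only at h
      have h0 := congrFun h i₀
      simp only [Pi.add_apply, Pi.smul_apply, smul_eq_mul, d.2, d'.2, zero_add] at h0
      have hcc : c = c' := mul_right_cancel₀ hi₀ h0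
      subst hcc
      have hdd : d.1 = d'.1 := by
        have := add_right_cancel h
        exact this
      exact Prod.ext rfl (Subtype.ext hdd)
    · intro x
      refine ⟨⟨x i₀ * (δ i₀)⁻¹, ⟨x - (x i₀ * (δ i₀)⁻¹) • δ, ?_⟩⟩, ?_⟩
      · simp only [Pi.sub_apply, Pi.smul_apply, smul_eq_mul]
        rw [mul_assoc, inv_mul_cancel₀ hi₀, mul_one, sub_self]
      · simp only
        abel
  calc ∑ d, f d = ∑ cd : ZMod p × D₀, f (cd.2.1 + cd.1 • δ) :=
        (Fintype.sum_bijective _ hbij _ f (fun _ => rfl)).symm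
    _ = ∑ cd : ZMod p × D₀, f cd.2.1 := Fintype.sum_congr _ _ (fun cd => hmul _ _)
    _ = ∑ _c : ZMod p, ∑ d : D₀, f d.1 := Fintype.sum_prod_type _
    _ = (p : ℕ) • ∑ d : D₀, f d.1 := by
        rw [Finset.sum_const, Finset.card_univ, ZMod.card]
    _ = 0 := by
        rw [nsmul_eq_mul, ZMod.natCast_self, zero_mul]


private lemma main_count (p e k : ℕ) [NeZero p] (hp : p.Prime) (he : 1 ≤ e) (hk : 0 < k)
    (Λ : Set ((Fin k × (Fin e → ZMod p)) → ZMod p))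
    (hsub : ∀ a ∈ Λ, ∑ x, a x = 0)
    (hinv : ∀ (q : Fin k → (Fin e → ZMod p)), ∀ a ∈ Λ,
      (fun x : Fin k × (Fin e → ZMod p) => a (x.1, x.2 + q x.1)) ∈ Λ)
    (hgen : ∀ b : (Fin k × (Fin e → ZMod p)) → ZMod p,
      (∑ x, b x = 0) → b ∈ AddSubgroup.closure Λ) :
    p ^ (2 * e) * (k - 1) ≤ Λ.ncard := by
  classical
  haveI : Fact p.Prime := ⟨hp⟩
  set L : Finset ((Fin k × (Fin e → ZMod p)) → ZMod p) := (Set.toFinite Λ).toFinset with hL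
  have hmemL : ∀ a, a ∈ L ↔ a ∈ Λ := fun a => Set.Finite.mem_toFinset _
  set θ : ((Fin k × (Fin e → ZMod p)) → ZMod p) → (Fin k → ZMod p) := fun a t => ∑ d : (Fin e → ZMod p), a (t, d) with hθ
  have θ_sum : ∀ a : (Fin k × (Fin e → ZMod p)) → ZMod p, ∑ t, θ a t = ∑ x, a x := by
    intro a
    rw [Fintype.sum_prod_type]
  set S : (Fin k → ZMod p) → Finset (Fin k) := fun v => univ.filter (fun t => v t ≠ 0) with hS
  have hSmem : ∀ v t, t ∈ S v ↔ v t ≠ 0 := by intro v t; simp [hS]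
  set t0 : Fin k := ⟨0, hk⟩ with ht0
  set t1 : (Fin k → ZMod p) → Fin k := fun v => if h : (S v).Nonempty then h.choose else t0 with ht1
  have ht1mem : ∀ v : Fin k → ZMod p, v ≠ 0 → t1 v ∈ S v := by
    intro v hv
    have hne : (S v).Nonempty := by
      obtain ⟨t, ht⟩ : ∃ t, v t ≠ 0 := Function.ne_iff.mp hv
      exact ⟨t, (hSmem v t).mpr ht⟩
    rw [ht1]
    simp only [dif_pos hne]
    exact hne.choose_spec
  set Vals : Finset (Fin k → ZMod p) := (L.image θ).erase 0 with hVals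
  have hvsum : ∀ v ∈ L.image θ, ∑ t, v t = 0 := by
    intro v hv
    obtain ⟨a, ha, rfl⟩ := Finset.mem_image.mp hv
    rw [θ_sum]
    exact hsub a ((hmemL a).mp ha)
  have hSsum : ∀ v : Fin k → ZMod p, ∑ t ∈ S v, v t = ∑ t, v t := fun v =>
    Finset.sum_filter_ne_zero _
  have hvtwo : ∀ v ∈ Vals, 2 ≤ (S v).card := by
    intro v hv
    have hv0 : v ≠ 0 := Finset.ne_of_mem_erase hv
    have hvs : ∑ t, v t = 0 := hvsum v (Finset.mem_of_mem_erase hv)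
    by_contra hlt
    push_neg at hlt
    have hne : (S v).Nonempty := ⟨t1 v, ht1mem v hv0⟩
    have hcard1 : (S v).card = 1 := by
      have := Finset.card_pos.mpr hne
      omega
    obtain ⟨c, hc⟩ := Finset.card_eq_one.mp hcard1
    have hvt : v c ≠ 0 := by
      have : c ∈ S v := by rw [hc]; exact Finset.mem_singleton_self c
      exact (hSmem v c).mp this
    apply hvt
    calc v c = ∑ t ∈ S v, v t := by rw [hc, Finset.sum_singleton]
      _ = ∑ t, v t := hSsum v
      _ = 0 := hvs
  set esingle : Fin k → (Fin k → ZMod p) := fun t t' => if t' = t then 1 else 0 with hesingle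
  set E : Finset (Fin k → ZMod p) := Vals.biUnion (fun v => ((S v).erase (t1 v)).image
      (fun t => esingle t - esingle (t1 v))) with hE
  -- decomposition of elements of Vals inside span of E
  have hdecomp : ∀ v ∈ Vals, v ∈ Submodule.span (ZMod p) (E : Set (Fin k → ZMod p)) := by
    intro v hv
    have hv0 : v ≠ 0 := Finset.ne_of_mem_erase hv
    have hvs : ∑ t, v t = 0 := hvsum v (Finset.mem_of_mem_erase hv)
    have ht1v := ht1mem v hv0
    have hrepr : v = ∑ t ∈ (S v).erase (t1 v),
        v t • (esingle t - esingle (t1 v)) := by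
      funext t'
      rw [Finset.sum_apply]
      simp only [hesingle, Pi.smul_apply, Pi.sub_apply, smul_eq_mul]
      by_cases h1 : t' = t1 v
      · have hterm : ∀ t ∈ (S v).erase (t1 v),
            v t * ((if t' = t then (1:ZMod p) else 0) - (if t' = t1 v then (1:ZMod p) else 0)) = -(v t) := by
          intro t ht
          have hne : t' ≠ t := by
            rw [h1]; exact fun h => (Finset.ne_of_mem_erase ht) h.symm
          rw [if_neg hne, if_pos h1]
          ring
        rw [Finset.sum_congr rfl hterm, Finset.sum_neg_distrib]
        have hsplit : v (t1 v) + ∑ t ∈ (S v).erase (t1 v), v t = 0 := by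
          rw [← Finset.sum_insert (Finset.notMem_erase (t1 v) (S v)),
            Finset.insert_erase ht1v, hSsum, hvs]
        rw [h1]
        linear_combination hsplit
      · by_cases h2 : t' ∈ S v
        · have h2' : t' ∈ (S v).erase (t1 v) := Finset.mem_erase.mpr ⟨h1, h2⟩
          rw [Finset.sum_eq_single t']
          · rw [if_pos rfl, if_neg h1]; ring
          · intro t ht htne
            have : t' ≠ t := fun h => htne h.symm
            rw [if_neg this, if_neg h1]; ring
          · intro habs; exact absurd h2' habs
        · have hvt' : v t' = 0 := by
            by_contra hvt
            exact h2 ((hSmem v t').mpr hvt)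
          rw [hvt']
          apply (Finset.sum_eq_zero ?_).symm
          intro t ht
          have htS : t ∈ S v := Finset.mem_of_mem_erase ht
          have : t' ≠ t := by
            intro h; rw [h] at h2; exact h2 htS
          rw [if_neg this, if_neg h1]; ring
    rw [hrepr]
    apply Submodule.sum_mem
    intro t ht
    apply Submodule.smul_mem
    apply Submodule.subset_span
    exact Finset.mem_coe.mpr (Finset.mem_biUnion.mpr ⟨v, hv, Finset.mem_image_of_mem _ ht⟩)
  have hspanL : ∀ a ∈ L, θ a ∈ Submodule.span (ZMod p) (E : Set (Fin k → ZMod p)) := by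
    intro a ha
    by_cases h : θ a = 0
    · rw [h]; exact Submodule.zero_mem _
    · exact hdecomp (θ a) (Finset.mem_erase.mpr ⟨h, Finset.mem_image_of_mem θ ha⟩)
  set θhom : ((Fin k × (Fin e → ZMod p)) → ZMod p) →+ (Fin k → ZMod p) :=
    { toFun := θ
      map_zero' := by funext t; simp [hθ]
      map_add' := by intro a b; funext t; simp [hθ, Finset.sum_add_distrib] } with hθhom
  have hclosure : ∀ b : (Fin k × (Fin e → ZMod p)) → ZMod p, (∑ x, b x = 0) →
      θ b ∈ Submodule.span (ZMod p) (E : Set (Fin k → ZMod p)) := by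
    intro b hb
    have h1 : AddSubgroup.closure Λ ≤ AddSubgroup.comap θhom
        ((Submodule.span (ZMod p) (E : Set (Fin k → ZMod p))).toAddSubgroup) := by
      rw [AddSubgroup.closure_le]
      intro a ha
      exact hspanL a ((hmemL a).mpr ha)
    exact h1 (hgen b hb)
  set SK : (Fin k → ZMod p) →ₗ[ZMod p] (ZMod p) :=
    { toFun := fun w => ∑ t, w t
      map_add' := by intro a b; simp [Finset.sum_add_distrib]
      map_smul' := by intro c w; simp [Finset.mul_sum] } with hSK
  have hkerle : LinearMap.ker SK ≤ Submodule.span (ZMod p) (E : Set (Fin k → ZMod p)) := by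
    intro w hw
    have hw' : ∑ t, w t = 0 := hw
    set b : (Fin k × (Fin e → ZMod p)) → ZMod p := fun x => if x.2 = 0 then w x.1 else 0 with hb
    have hθb : θ b = w := by
      funext t
      simp only [hθ, hb]
      rw [Fintype.sum_ite_eq' (0 : Fin e → ZMod p) (fun _ => w t)]
    have hbs : ∑ x, b x = 0 := by rw [← θ_sum, hθb]; exact hw'
    rw [← hθb]
    exact hclosure b hbs
  have hsurj : LinearMap.range SK = ⊤ := by
    rw [LinearMap.range_eq_top]
    intro c
    refine ⟨Pi.single t0 c, ?_⟩
    simp only [hSK, LinearMap.coe_mk, AddHom.coe_mk]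
    exact Fintype.sum_pi_single' t0 c
  have hdim : k - 1 ≤ E.card := by
    have h1 := LinearMap.finrank_range_add_finrank_ker SK
    rw [hsurj, finrank_top] at h1
    have h2 : Module.finrank (ZMod p) (Fin k → ZMod p) = k := by
      rw [Module.finrank_pi, Fintype.card_fin]
    have h3 : Module.finrank (ZMod p) (ZMod p) = 1 := Module.finrank_self (ZMod p)
    have h5 := Submodule.finrank_mono hkerle
    have h6 : Module.finrank (ZMod p) (Submodule.span (ZMod p) (E : Set (Fin k → ZMod p))) ≤ E.card :=
      finrank_span_finset_le_card E
    omega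
  have hEcard : E.card ≤ ∑ v ∈ Vals, ((S v).card - 1) := by
    calc E.card ≤ ∑ v ∈ Vals, (((S v).erase (t1 v)).image
        (fun t => esingle t - esingle (t1 v))).card :=
          Finset.card_biUnion_le
      _ ≤ ∑ v ∈ Vals, ((S v).card - 1) := by
          apply Finset.sum_le_sum
          intro v hv
          calc (((S v).erase (t1 v)).image _).card ≤ ((S v).erase (t1 v)).card :=
                Finset.card_image_le
            _ = (S v).card - 1 := Finset.card_erase_of_mem (ht1mem v (Finset.ne_of_mem_erase hv))
  -- fiber bounds
  have hfiber : ∀ v ∈ Vals, p ^ (e * (S v).card) ≤ (L.filter (fun a => θ a = v)).card := by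
    intro v hv
    obtain ⟨a, haL, hav⟩ := Finset.mem_image.mp (Finset.mem_of_mem_erase hv)
    have haΛ : a ∈ Λ := (hmemL a).mp haL
    set hatq : ((↥(S v)) → (Fin e → ZMod p)) → (Fin k → (Fin e → ZMod p)) :=
      fun q t => if h : t ∈ S v then q ⟨t, h⟩ else 0 with hhatq
    set F : ((↥(S v)) → (Fin e → ZMod p)) → ((Fin k × (Fin e → ZMod p)) → ZMod p) := fun q => fun x => a (x.1, x.2 + hatq q x.1) with hF
    have hat_eq : ∀ (q : (↥(S v)) → (Fin e → ZMod p)) (t : Fin k) (ht : t ∈ S v),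
        hatq q t = q ⟨t, ht⟩ := by
      intro q t ht
      rw [hhatq]
      exact dif_pos ht
    have hFmem : ∀ q, F q ∈ L.filter (fun b => θ b = v) := by
      intro q
      rw [Finset.mem_filter]
      refine ⟨(hmemL _).mpr (hinv (hatq q) a haΛ), ?_⟩
      rw [← hav]
      funext t
      exact Fintype.sum_equiv (Equiv.addRight (hatq q t)) _ _ (fun d => rfl)
    have hFinj : Function.Injective F := by
      intro q q' hqq
      have hkey : ∀ t, hatq q t = hatq q' t := by
        intro t
        by_contra hne
        have hδ : hatq q t - hatq q' t ≠ 0 := sub_ne_zero.mpr hne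
        have hstep : ∀ d : (Fin e → ZMod p), a (t, d + (hatq q t - hatq q' t)) = a (t, d) := by
          intro d
          have h1 := congrFun hqq (t, d - hatq q' t)
          simp only [hF] at h1
          have e1 : d - hatq q' t + hatq q t = d + (hatq q t - hatq q' t) := by abel
          have e2 : d - hatq q' t + hatq q' t = d := by abel
          rw [e1, e2] at h1
          exact h1
        have hzero : θ a t = 0 := aux_translate_sum (fun d => a (t, d)) _ hδ hstep
        have htv : t ∈ S v := by
          by_contra hts
          apply hne
          rw [hhatq]
          simp only [dif_neg hts]
        have hvt : v t ≠ 0 := (hSmem v t).mp htv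
        rw [← hav] at hvt
        exact hvt hzero
      funext tt
      have h3 := hkey tt.1
      rw [hat_eq q tt.1 tt.2, hat_eq q' tt.1 tt.2] at h3
      simpa only [Subtype.coe_eta] using h3
    have hcard1 : Fintype.card ((↥(S v)) → (Fin e → ZMod p)) ≤ (L.filter (fun b => θ b = v)).card := by
      rw [← Fintype.card_coe (L.filter (fun b => θ b = v))]
      exact Fintype.card_le_of_injective (fun q => ⟨F q, hFmem q⟩)
        (fun q q' h => hFinj (congrArg Subtype.val h))
    have hcard2 : Fintype.card ((↥(S v)) → (Fin e → ZMod p)) = p ^ (e * (S v).card) := by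
      rw [Fintype.card_fun, Fintype.card_coe]
      have hcD : Fintype.card (Fin e → ZMod p) = p ^ e := by
        rw [Fintype.card_fun, ZMod.card, Fintype.card_fin]
      rw [hcD, ← pow_mul]
    omega
  -- assembly
  have hM : 2 ≤ p ^ e := by
    calc 2 ≤ p := hp.two_le
      _ = p ^ 1 := (pow_one p).symm
      _ ≤ p ^ e := Nat.pow_le_pow_right hp.pos he
  have hLcard : L.card = ∑ v ∈ L.image θ, (L.filter (fun a => θ a = v)).card :=
    Finset.card_eq_sum_card_fiberwise (fun a ha => Finset.mem_image_of_mem θ ha)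
  have hsum1 : ∑ v ∈ Vals, (L.filter (fun a => θ a = v)).card ≤ L.card := by
    rw [hLcard]
    apply Finset.sum_le_sum_of_subset (Finset.erase_subset _ _)
  have hchain : p ^ (2 * e) * (k - 1) ≤ ∑ v ∈ Vals, p ^ (e * (S v).card) := by
    calc p ^ (2 * e) * (k - 1) ≤ p ^ (2 * e) * ∑ v ∈ Vals, ((S v).card - 1) :=
          Nat.mul_le_mul_left _ (le_trans hdim hEcard)
      _ = ∑ v ∈ Vals, p ^ (2 * e) * ((S v).card - 1) := Finset.mul_sum _ _ _
      _ ≤ ∑ v ∈ Vals, p ^ (e * (S v).card) := by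
          apply Finset.sum_le_sum
          intro v hv
          have h2 := hvtwo v hv
          have := aux_pow_ge (p ^ e) hM ((S v).card) h2
          calc p ^ (2 * e) * ((S v).card - 1) = (p ^ e) ^ 2 * ((S v).card - 1) := by
                rw [← pow_mul, mul_comm e 2]
            _ ≤ (p ^ e) ^ (S v).card := this
            _ = p ^ (e * (S v).card) := by rw [← pow_mul]
  have hfinal : p ^ (2 * e) * (k - 1) ≤ L.card :=
    le_trans hchain (le_trans (Finset.sum_le_sum hfiber) hsum1)
  rwa [Set.ncard_eq_toFinset_card Λ (Set.toFinite Λ)]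

/-- Let `p` be a prime, `n` a positive integer and `p^e` the highest
power of `p` dividing `n` (`e = 0` allowed).  Let `P` be a Sylow `p`-subgroup of
`S_n`.  Every subset `Λ` of `X_n(p) = {a ∈ (ℤ/pℤ)^n : ∑ aᵢ = 0}` that is invariant
under the coordinate-permutation action of `P` and generates `X_n(p)` as an abelian
group has at least `p^e · (n - p^e)` elements. -/
theorem stmt_1 (p n e : ℕ) (hp : p.Prime) (hn : 0 < n)
    (he : p ^ e ∣ n ∧ ¬ p ^ (e + 1) ∣ n)
    (P : Sylow p (Equiv.Perm (Fin n)))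
    (Λ : Set (Fin n → ZMod p))
    (hΛsub : ∀ a ∈ Λ, ∑ i, a i = 0)
    (hΛinv : ∀ σ ∈ (P : Subgroup (Equiv.Perm (Fin n))),
      (fun a : Fin n → ZMod p => a ∘ ⇑σ⁻¹) '' Λ = Λ)
    (hΛgen : (AddSubgroup.closure Λ : Set (Fin n → ZMod p)) =
      {a : Fin n → ZMod p | ∑ i, a i = 0}) :
    p ^ e * (n - p ^ e) ≤ Λ.ncard := by
  classical
  haveI : Fact p.Prime := ⟨hp⟩
  haveI : NeZero p := ⟨hp.ne_zero⟩
  obtain ⟨hdvd, -⟩ := he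
  by_cases he0 : e = 0
  · -- rank argument
    subst he0
    simp only [pow_zero, one_mul]
    haveI : Fintype Λ := (Set.toFinite Λ).fintype
    set SN : (Fin n → ZMod p) →ₗ[ZMod p] (ZMod p) :=
      { toFun := fun w => ∑ t, w t
        map_add' := by intro a b; simp [Finset.sum_add_distrib]
        map_smul' := by intro c w; simp [Finset.mul_sum] } with hSN
    have hker : LinearMap.ker SN ≤ Submodule.span (ZMod p) Λ := by
      intro w hw
      have hw' : ∑ t, w t = 0 := hw
      have hwc : w ∈ AddSubgroup.closure Λ := by
        have hmem : w ∈ (AddSubgroup.closure Λ : Set (Fin n → ZMod p)) := by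
          rw [hΛgen]; exact hw'
        exact hmem
      have hle : AddSubgroup.closure Λ ≤ (Submodule.span (ZMod p) Λ).toAddSubgroup := by
        rw [AddSubgroup.closure_le]
        exact Submodule.subset_span
      exact hle hwc
    have hsurj : LinearMap.range SN = ⊤ := by
      rw [LinearMap.range_eq_top]
      intro c
      refine ⟨Pi.single ⟨0, hn⟩ c, ?_⟩
      simp only [hSN, LinearMap.coe_mk, AddHom.coe_mk]
      exact Fintype.sum_pi_single' _ c
    have h1 := LinearMap.finrank_range_add_finrank_ker SN
    rw [hsurj, finrank_top] at h1
    have h2 : Module.finrank (ZMod p) (Fin n → ZMod p) = n := by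
      rw [Module.finrank_pi, Fintype.card_fin]
    have h3 : Module.finrank (ZMod p) (ZMod p) = 1 := Module.finrank_self (ZMod p)
    have h5 := Submodule.finrank_mono hker
    have h6 : Module.finrank (ZMod p) (Submodule.span (ZMod p) Λ) ≤ Λ.toFinset.card :=
      finrank_span_le_card Λ
    have h7 : Λ.ncard = Λ.toFinset.card := Set.ncard_eq_toFinset_card' Λ
    omega
  · have he1 : 1 ≤ e := Nat.one_le_iff_ne_zero.mpr he0
    set k : ℕ := n / p ^ e with hk
    have hkn : k * p ^ e = n := Nat.div_mul_cancel hdvd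
    have hk1 : 0 < k := by
      rcases Nat.eq_zero_or_pos k with h | h
      · rw [h, zero_mul] at hkn; omega
      · exact h
    have hcD : Fintype.card (Fin e → ZMod p) = p ^ e := by
      rw [Fintype.card_fun, ZMod.card, Fintype.card_fin]
    have hcX : Fintype.card (Fin k × (Fin e → ZMod p)) = n := by
      rw [Fintype.card_prod, Fintype.card_fin, hcD, hkn]
    set ι : Fin n ≃ (Fin k × (Fin e → ZMod p)) :=
      Fintype.equivOfCardEq (by rw [Fintype.card_fin, hcX]) with hι
    set sh : (Fin k → (Fin e → ZMod p)) → Equiv.Perm (Fin k × (Fin e → ZMod p)) := fun q =>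
      { toFun := fun x => (x.1, x.2 + q x.1)
        invFun := fun x => (x.1, x.2 - q x.1)
        left_inv := by intro x; simp
        right_inv := by intro x; simp } with hsh
    set piq : (Fin k → (Fin e → ZMod p)) → Equiv.Perm (Fin n) := fun q =>
      (ι.trans (sh q)).trans ι.symm with hpiq
    set Φ : Multiplicative (Fin k → (Fin e → ZMod p)) →* Equiv.Perm (Fin n) :=
      { toFun := fun q => piq (Multiplicative.toAdd q)
        map_one' := by
          apply Equiv.ext
          intro x
          simp [hpiq, hsh]
        map_mul' := by
          intro q q'
          apply Equiv.ext
          intro x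
          simp only [hpiq, hsh, Equiv.trans_apply, Equiv.Perm.mul_apply, Equiv.coe_fn_mk,
            Equiv.apply_symm_apply, toAdd_mul, Pi.add_apply]
          congr 2
          abel } with hΦ
    have hT : IsPGroup p Φ.range :=
      ZModModule.isPGroup_multiplicative.of_surjective Φ.rangeRestrict Φ.rangeRestrict_surjective
    obtain ⟨Q₀, hTQ₀⟩ := hT.exists_le_sylow
    obtain ⟨g, hg⟩ := MulAction.exists_smul_eq (Equiv.Perm (Fin n)) Q₀ P
    set ε : Fin n ≃ (Fin k × (Fin e → ZMod p)) := (g⁻¹ : Equiv.Perm (Fin n)).trans ι with hε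
    have hmem : ∀ q : Fin k → (Fin e → ZMod p),
        ((ε.trans (sh q)).trans ε.symm : Equiv.Perm (Fin n)) ∈ (P : Subgroup (Equiv.Perm (Fin n))) := by
      intro q
      have h1 : piq q ∈ (Q₀ : Subgroup (Equiv.Perm (Fin n))) :=
        hTQ₀ (show piq q ∈ Φ.range from ⟨Multiplicative.ofAdd q, rfl⟩)
      have h2 : g * piq q * g⁻¹ ∈ (P : Subgroup (Equiv.Perm (Fin n))) := by
        rw [← hg, Sylow.coe_subgroup_smul, Subgroup.mem_pointwise_smul_iff_inv_smul_mem]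
        have hconj : (MulAut.conj g)⁻¹ • (g * piq q * g⁻¹) = piq q := by
          simp [MulAut.smul_def, mul_assoc]
        rw [hconj]
        exact h1
      have h3 : ((ε.trans (sh q)).trans ε.symm : Equiv.Perm (Fin n)) = g * piq q * g⁻¹ := by
        apply Equiv.ext
        intro x
        simp only [hε, hpiq, Equiv.Perm.mul_apply, Equiv.trans_apply, Equiv.symm_trans_apply,
          Equiv.Perm.inv_def, Equiv.symm_symm]
      rw [h3]; exact h2
    set Λ₂ : Set ((Fin k × (Fin e → ZMod p)) → ZMod p) := (fun a => a ∘ ⇑ε.symm) '' Λ with hΛ₂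
    have hcomp_inj : Function.Injective (fun a : Fin n → ZMod p => a ∘ ⇑ε.symm) := by
      intro a b hab
      funext i
      have h := congrFun hab (ε i)
      simpa using h
    have hncard : Λ₂.ncard = Λ.ncard := Set.ncard_image_of_injective Λ hcomp_inj
    have hsub₂ : ∀ b ∈ Λ₂, ∑ x, b x = 0 := by
      rintro b ⟨a, ha, rfl⟩
      have h := hΛsub a ha
      have heq : ∑ x, (a ∘ ⇑ε.symm) x = ∑ i, a i :=
        Fintype.sum_equiv ε.symm _ _ (fun x => rfl)
      rw [heq]; exact h
    have hinv₂ : ∀ (q : Fin k → (Fin e → ZMod p)), ∀ b ∈ Λ₂,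
        (fun x : Fin k × (Fin e → ZMod p) => b (x.1, x.2 + q x.1)) ∈ Λ₂ := by
      rintro q b ⟨a, ha, rfl⟩
      set σ : Equiv.Perm (Fin n) := (ε.trans (sh q)).trans ε.symm with hσ
      have hσP : σ ∈ (P : Subgroup (Equiv.Perm (Fin n))) := hmem q
      have ha' : a ∘ ⇑σ ∈ Λ := by
        have himg := hΛinv σ⁻¹ (inv_mem hσP)
        rw [inv_inv] at himg
        rw [← himg]
        exact ⟨a, ha, rfl⟩
      refine ⟨a ∘ ⇑σ, ha', ?_⟩
      funext x
      show a (σ (ε.symm x)) = (a ∘ ⇑ε.symm) (x.1, x.2 + q x.1)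
      show a (σ (ε.symm x)) = a (ε.symm (x.1, x.2 + q x.1))
      congr 1
      simp [hσ, hsh, Equiv.trans_apply, Equiv.apply_symm_apply]
    have hgen₂ : ∀ b : (Fin k × (Fin e → ZMod p)) → ZMod p,
        (∑ x, b x = 0) → b ∈ AddSubgroup.closure Λ₂ := by
      intro b hb
      have hsum : ∑ i, (b ∘ ⇑ε) i = 0 := by
        have heq : ∑ i, (b ∘ ⇑ε) i = ∑ x, b x :=
          Fintype.sum_equiv ε _ _ (fun i => rfl)
        rw [heq]; exact hb
      have hc1 : (b ∘ ⇑ε) ∈ AddSubgroup.closure Λ := by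
        have hmem2 : (b ∘ ⇑ε) ∈ (AddSubgroup.closure Λ : Set (Fin n → ZMod p)) := by
          rw [hΛgen]; exact hsum
        exact hmem2
      set f : (Fin n → ZMod p) →+ ((Fin k × (Fin e → ZMod p)) → ZMod p) :=
        { toFun := fun a => a ∘ ⇑ε.symm
          map_zero' := rfl
          map_add' := fun _ _ => rfl } with hf
      have hmap : f (b ∘ ⇑ε) ∈ (AddSubgroup.closure Λ).map f :=
        AddSubgroup.mem_map_of_mem f hc1
      rw [AddMonoidHom.map_closure] at hmap
      have hfb : f (b ∘ ⇑ε) = b := by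
        funext x
        show b (ε (ε.symm x)) = b x
        rw [Equiv.apply_symm_apply]
      rw [hfb] at hmap
      exact hmap
    have hmain := main_count p e k hp he1 hk1 Λ₂ hsub₂ hinv₂ hgen₂
    rw [hncard] at hmain
    have h1 : n - p ^ e = p ^ e * (k - 1) := by
      calc n - p ^ e = k * p ^ e - 1 * p ^ e := by rw [hkn, one_mul]
        _ = (k - 1) * p ^ e := (Nat.sub_mul k 1 (p ^ e)).symm
        _ = p ^ e * (k - 1) := mul_comm _ _
    calc p ^ e * (n - p ^ e) = p ^ (2 * e) * (k - 1) := by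
          rw [h1, ← mul_assoc, ← pow_add, two_mul]
      _ ≤ Λ.ncard := hmain
end

section
/- Let D be a finite abelian group of exponent m, F a finite group acting on D by automorphisms, and G = D ⋊ F. Let k be a field whose characteristic does not divide m and which contains a primitive m-th root of unity. If G admits a faithful k-linear representation on a finite-dimensional k-vector space V, then there exists an F-invariant subset Λ of the character group X(D) = Hom(D, kˣ), of cardinality at most dim_k V, which generates X(D) as an abelian group. In particular, if every F-invariant generating subset of X(D) has at least d elements, then every faithful finite-dimensional k-linear representation of G has dimension at least d. -/
open Polynomial

private lemma ker_aeval_prod_le' {k V : Type*} [Field k] [AddCommGroup V] [Module k V]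
    (f : Module.End k V) (s : Finset k) :
    LinearMap.ker (aeval f (∏ a ∈ s, (X - C a))) ≤
      ⨆ a ∈ s, LinearMap.ker (aeval f (X - C a)) := by
  classical
  induction s using Finset.induction_on with
  | empty => simp [Module.End.one_eq_id]
  | @insert a s ha ih =>
    rw [Finset.prod_insert ha]
    have hcop : IsCoprime (X - C a) (∏ b ∈ s, (X - C b)) := by
      refine IsCoprime.prod_right fun b hb => ?_
      exact (pairwise_coprime_X_sub_C (Subtype.val_injective (p := fun x => x ∈ insert a s))
        (i := ⟨a, Finset.mem_insert_self a s⟩) (j := ⟨b, Finset.mem_insert_of_mem hb⟩)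
        (by simp; rintro rfl; exact ha hb))
    rw [← Polynomial.sup_ker_aeval_eq_ker_aeval_mul_of_coprime f hcop]
    rw [Finset.iSup_insert]
    exact sup_le_sup le_rfl ih

private lemma iSup_maxGen_top' {k V : Type*} [Field k] [AddCommGroup V] [Module k V]
    {m : ℕ} (hm : 0 < m) {ζ : k} (hζ : IsPrimitiveRoot ζ m)
    (f : Module.End k V) (hf : f ^ m = 1) :
    ⨆ μ, f.maxGenEigenspace μ = ⊤ := by
  have h0 : aeval f (X ^ m - 1 : k[X]) = 0 := by simp [hf]
  have h1 : (⊤ : Submodule k V) = LinearMap.ker (aeval f (X ^ m - 1 : k[X])) := by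
    rw [h0]; simp
  rw [eq_top_iff, h1, Polynomial.X_pow_sub_one_eq_prod hm hζ]
  refine le_trans (ker_aeval_prod_le' f _) ?_
  refine iSup₂_le fun a _ => ?_
  have : LinearMap.ker (aeval f (X - C a)) = f.eigenspace a := by
    rw [Module.End.eigenspace_def]
    rw [map_sub, aeval_X, aeval_C, Algebra.algebraMap_eq_smul_one]
  rw [this]
  exact le_trans ((f.genEigenspace a).mono le_top) (le_iSup (fun μ => f.maxGenEigenspace μ) a)

/-- Let `D` be a finite abelian group of exponent `m`, `F` a finite
group acting on `D` by automorphisms (via `φ : F →* MulAut D`), and `G = D ⋊ F`.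
Let `k` be a field whose characteristic does not divide `m` and which contains a
primitive `m`-th root of unity.  If `G` admits a faithful `k`-linear representation
on a finite-dimensional `k`-vector space `V`, then there exists an `F`-invariant
subset `Λ` of the character group `X(D) = Hom(D, kˣ)`, of cardinality at most
`dim_k V`, which generates `X(D)` as an abelian group.  In particular, if every
`F`-invariant generating subset of `X(D)` has at least `d` elements, then
`dim_k V ≥ d`. -/
theorem stmt_2 (D : Type) [CommGroup D] [Fintype D]
    (F : Type) [Group F] [Fintype F] (φ : F →* MulAut D)
    (m : ℕ) (hm : Monoid.exponent D = m)
    (k : Type) [Field k] (hchar : ¬ (ringChar k ∣ m))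
    (ζ : k) (hζ : IsPrimitiveRoot ζ m)
    (V : Type) [AddCommGroup V] [Module k V] [FiniteDimensional k V]
    (ρ : D ⋊[φ] F →* (V →ₗ[k] V)ˣ) (hρ : Function.Injective ρ) :
    (∃ Λ : Set (D →* kˣ),
      (∀ f : F, (fun χ : D →* kˣ => χ.comp (φ f⁻¹).toMonoidHom) '' Λ = Λ) ∧
      Λ.ncard ≤ Module.finrank k V ∧
      Subgroup.closure Λ = ⊤) ∧
    (∀ d : ℕ,
      (∀ Λ : Set (D →* kˣ),
        (∀ f : F, (fun χ : D →* kˣ => χ.comp (φ f⁻¹).toMonoidHom) '' Λ = Λ) →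
        Subgroup.closure Λ = ⊤ → d ≤ Λ.ncard) →
      d ≤ Module.finrank k V) := by
  classical
  have hm0 : m ≠ 0 := fun h => hchar (h ▸ dvd_zero _)
  have hmpos : 0 < m := Nat.pos_of_ne_zero hm0
  haveI : NeZero m := ⟨hm0⟩
  have hmk : (m : k) ≠ 0 := fun h =>
    hchar ((CharP.cast_eq_zero_iff k (ringChar k) m).mp h)
  -- the action of D on V
  set u : D →* (V →ₗ[k] V)ˣ := ρ.comp (SemidirectProduct.inl) with hu
  set E : D → Module.End k V := fun d => (u d : V →ₗ[k] V) with hE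
  have hEmul : ∀ a b : D, E (a * b) = E a * E b := by
    intro a b; simp [hE, map_mul]
  have hcomm : ∀ a b : D, Commute (E a) (E b) := by
    intro a b
    show E a * E b = E b * E a
    rw [← hEmul, ← hEmul, mul_comm]
  have hpow : ∀ d : D, (E d) ^ m = 1 := by
    intro d
    have hd : d ^ m = 1 := by rw [← hm]; exact Monoid.pow_exponent_eq_one d
    have : (u d) ^ m = 1 := by rw [← map_pow, hd, map_one]
    calc (E d) ^ m = ((u d ^ m : (V →ₗ[k] V)ˣ) : V →ₗ[k] V) := by
          rw [Units.val_pow_eq_pow_val]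
      _ = 1 := by rw [this, Units.val_one]
  have hEone : E 1 = 1 := by simp [hE]
  -- each E d is (finitely) semisimple
  have hsf : Squarefree (X ^ m - 1 : k[X]) := by
    have hsep : (X ^ m - C (1 : k)).Separable :=
      Polynomial.separable_X_pow_sub_C (1 : k) hmk one_ne_zero
    rw [map_one] at hsep
    exact hsep.squarefree
  have haev : ∀ d, aeval (E d) (X ^ m - 1 : k[X]) = 0 := fun d => by simp [hpow d]
  have hss : ∀ d, (E d).IsFinitelySemisimple := fun d =>
    (Module.End.isSemisimple_of_squarefree_aeval_eq_zero hsf (haev d)).isFinitelySemisimple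
  have hmaxeq : ∀ d μ, (E d).maxGenEigenspace μ = (E d).eigenspace μ := fun d μ =>
    (hss d).maxGenEigenspace_eq_eigenspace μ
  -- weight spaces
  set W : (D → k) → Submodule k V := fun χ => ⨅ d, (E d).eigenspace (χ d) with hW
  have hWtop : ⨆ χ : D → k, W χ = ⊤ := by
    have := Module.End.iSup_iInf_maxGenEigenspace_eq_top_of_iSup_maxGenEigenspace_eq_top_of_commute
      E (fun a b _ => hcomm a b) (fun d => iSup_maxGen_top' hmpos hζ (E d) (hpow d))
    simpa only [hmaxeq] using this
  have hWindep : iSupIndep W := by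
    have := Module.End.independent_iInf_maxGenEigenspace_of_forall_mapsTo E
      (fun i j μ => Module.End.mapsTo_maxGenEigenspace_of_comm (hcomm j i) μ)
    simpa only [hmaxeq] using this
  -- the set of weights
  set θ : (D →* kˣ) → (D → k) := fun ψ d => (ψ d : k) with hθ
  have hθinj : Function.Injective θ := by
    intro ψ₁ ψ₂ h
    ext d : 1
    exact Units.ext (congrFun h d)
  set Λ : Set (D →* kˣ) := {ψ | W (θ ψ) ≠ ⊥} with hΛ
  -- cardinality bound
  haveI : Fintype {χ : D → k // W χ ≠ ⊥} := hWindep.fintypeNeBotOfFiniteDimensional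
  have hcard : Λ.ncard ≤ Module.finrank k V := by
    have h1 : Fintype.card {χ : D → k // W χ ≠ ⊥} ≤ Module.finrank k V :=
      hWindep.subtype_ne_bot_le_finrank
    have hg : Function.Injective (fun ψ : Λ => (⟨θ ψ.1, ψ.2⟩ : {χ : D → k // W χ ≠ ⊥})) := by
      intro a b hab
      exact Subtype.ext (hθinj (congrArg Subtype.val hab))
    have h2 : Nat.card Λ ≤ Fintype.card {χ : D → k // W χ ≠ ⊥} := by
      rw [← Nat.card_eq_fintype_card]
      exact Nat.card_le_card_of_injective _ hg
    rw [← Nat.card_coe_set_eq]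
    exact le_trans h2 h1
  -- recovering a character from a nonzero weight space
  have hrecover : ∀ χ : D → k, W χ ≠ ⊥ → ∃ ψ : D →* kˣ, θ ψ = χ := by
    intro χ hχ
    obtain ⟨v, hv, hv0⟩ := Submodule.exists_mem_ne_zero_of_ne_bot hχ
    have hev : ∀ d, E d v = χ d • v := by
      intro d
      have : v ∈ (E d).eigenspace (χ d) := (Submodule.mem_iInf _).mp hv d
      exact Module.End.mem_eigenspace_iff.mp this
    have key : ∀ a b : k, a • v = b • v → a = b := by
      intro a b hab
      have : (a - b) • v = 0 := by rw [sub_smul, hab, sub_self]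
      rcases smul_eq_zero.mp this with h | h
      · exact sub_eq_zero.mp h
      · exact absurd h hv0
    have hmul : ∀ a b : D, χ (a * b) = χ a * χ b := by
      intro a b
      refine key (χ (a * b)) (χ a * χ b) ?_
      rw [← hev, hEmul, Module.End.mul_apply, hev b, map_smul, hev a, smul_smul, mul_comm]
    have hone : χ 1 = 1 := by
      refine key (χ 1) 1 ?_
      rw [← hev, hEone, Module.End.one_apply, one_smul]
    have hunit : ∀ d, χ d ≠ 0 := by
      intro d
      have : χ d * χ d⁻¹ = 1 := by rw [← hmul, mul_inv_cancel, hone]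
      exact left_ne_zero_of_mul_eq_one this
    refine ⟨{ toFun := fun d => Units.mk0 (χ d) (hunit d),
              map_one' := Units.ext (by simpa using hone),
              map_mul' := fun a b => Units.ext (by simpa using hmul a b) }, ?_⟩
    funext d
    rfl
  -- kernels of Λ separate: only trivial common kernel
  have hker : ∀ d : D, (∀ ψ ∈ Λ, ψ d = 1) → d = 1 := by
    intro d hd
    have hEd : E d = 1 := by
      have hQ : ∀ χ : D → k, W χ ≤ LinearMap.eqLocus (E d) (1 : V →ₗ[k] V) := by
        intro χ
        by_cases hbot : W χ = ⊥
        · rw [hbot]; exact bot_le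
        · obtain ⟨ψ, hψ⟩ := hrecover χ hbot
          have hψΛ : ψ ∈ Λ := by rw [hΛ, Set.mem_setOf_eq, hψ]; exact hbot
          intro x hx
          have hx' : E d x = χ d • x :=
            Module.End.mem_eigenspace_iff.mp ((Submodule.mem_iInf _).mp hx d)
          have : χ d = 1 := by
            rw [← hψ]
            show ((ψ d : kˣ) : k) = 1
            rw [hd ψ hψΛ, Units.val_one]
          show E d x = (1 : V →ₗ[k] V) x
          rw [hx', this, one_smul, Module.End.one_apply]
      have : (⊤ : Submodule k V) ≤ LinearMap.eqLocus (E d) (1 : V →ₗ[k] V) := by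
        rw [← hWtop]
        exact iSup_le hQ
      ext x
      exact this Submodule.mem_top
    have : u d = 1 := Units.ext hEd
    have : SemidirectProduct.inl (φ := φ) d = 1 := by
      apply hρ
      rw [map_one]
      exact this
    exact SemidirectProduct.inl_injective (by rw [this, map_one])
  -- duality setup
  haveI hero : HasEnoughRootsOfUnity k m := ⟨⟨ζ, hζ⟩, inferInstance⟩
  haveI hero1 : HasEnoughRootsOfUnity k (Monoid.exponent D) := by rwa [hm]
  obtain ⟨e1⟩ := CommGroup.monoidHom_mulEquiv_of_hasEnoughRootsOfUnity D k
  haveI : Finite (D →* kˣ) := Finite.of_equiv D e1.symm.toEquiv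
  have hexpX : Monoid.exponent (D →* kˣ) = Monoid.exponent D :=
    Monoid.exponent_eq_of_mulEquiv e1
  haveI hero2 : HasEnoughRootsOfUnity k (Monoid.exponent (D →* kˣ)) := by
    rw [hexpX]; exact hero1
  obtain ⟨e2⟩ := CommGroup.monoidHom_mulEquiv_of_hasEnoughRootsOfUnity (D →* kˣ) k
  haveI : Finite ((D →* kˣ) →* kˣ) := Finite.of_equiv _ e2.symm.toEquiv
  -- evaluation map (double duality)
  set E2 : D →* ((D →* kˣ) →* kˣ) := MonoidHom.eval with hE2
  have hE2apply : ∀ (d : D) (ψ : D →* kˣ), E2 d ψ = ψ d := fun d ψ => rfl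
  have hE2inj : Function.Injective E2 := by
    rw [injective_iff_map_eq_one]
    intro d hd1
    by_contra hd
    obtain ⟨ψ, hψ⟩ := CommGroup.exists_apply_ne_one_of_hasEnoughRootsOfUnity D k hd
    exact hψ (by rw [← hE2apply d ψ, hd1]; rfl)
  have hE2surj : Function.Surjective E2 := by
    have hcards : Nat.card D = Nat.card ((D →* kˣ) →* kˣ) := by
      rw [Nat.card_eq_of_bijective _ e2.bijective, Nat.card_eq_of_bijective _ e1.bijective]
    exact ((Nat.bijective_iff_injective_and_card E2).mpr ⟨hE2inj, hcards ▸ rfl⟩).2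
  -- generation
  have hclosure : Subgroup.closure Λ = ⊤ := by
    by_contra hne
    obtain ⟨χ₀, hχ₀⟩ : ∃ χ₀ : D →* kˣ, χ₀ ∉ Subgroup.closure Λ := by
      by_contra h
      push_neg at h
      exact hne ((Subgroup.eq_top_iff' _).mpr h)
    set H := Subgroup.closure Λ with hH
    haveI : H.Normal := ⟨fun n hn g => by rwa [show g * n * g⁻¹ = n from MonoidHom.ext fun x => by simp [mul_inv_cancel_comm]]⟩
    haveI : Finite ((D →* kˣ) ⧸ H) := Quotient.finite _
    have hdvd : Monoid.exponent ((D →* kˣ) ⧸ H) ∣ m := by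
      calc Monoid.exponent ((D →* kˣ) ⧸ H) ∣ Monoid.exponent (D →* kˣ) :=
            MonoidHom.exponent_dvd (QuotientGroup.mk'_surjective H)
        _ = m := by rw [hexpX, hm]
    haveI : HasEnoughRootsOfUnity k (Monoid.exponent ((D →* kˣ) ⧸ H)) :=
      HasEnoughRootsOfUnity.of_dvd k hdvd
    have hq1 : (QuotientGroup.mk' H) χ₀ ≠ 1 := by
      rw [Ne, QuotientGroup.mk'_apply, QuotientGroup.eq_one_iff]
      exact hχ₀
    obtain ⟨φ₀, hφ₀⟩ :=
      CommGroup.exists_apply_ne_one_of_hasEnoughRootsOfUnity ((D →* kˣ) ⧸ H) k hq1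
    obtain ⟨d, hd⟩ := hE2surj (φ₀.comp (QuotientGroup.mk' H))
    have hdΛ : ∀ ψ ∈ Λ, ψ d = 1 := by
      intro ψ hψ
      have hmem : ψ ∈ H := Subgroup.subset_closure hψ
      have h1 : (φ₀.comp (QuotientGroup.mk' H)) ψ = 1 := by
        rw [MonoidHom.comp_apply, QuotientGroup.mk'_apply,
          (QuotientGroup.eq_one_iff ψ).mpr hmem, map_one]
      rw [← hd] at h1
      exact h1
    have hd1 : d = 1 := hker d hdΛ
    rw [hd1, map_one] at hd
    apply hφ₀
    have : (φ₀.comp (QuotientGroup.mk' H)) χ₀ = 1 := by rw [← hd]; rfl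
    rw [MonoidHom.comp_apply, QuotientGroup.mk'_apply] at this
    exact this
  -- F-invariance
  have hφcancel : ∀ (f : F) (d : D), (φ f) ((φ f⁻¹) d) = d := by
    intro f d
    have h1 : φ f * φ f⁻¹ = 1 := by rw [← map_mul, mul_inv_cancel, map_one]
    calc (φ f) ((φ f⁻¹) d) = (φ f * φ f⁻¹) d := rfl
      _ = d := by rw [h1]; rfl
  have hstep : ∀ (f : F) (ψ : D →* kˣ), ψ ∈ Λ → ψ.comp (φ f⁻¹).toMonoidHom ∈ Λ := by
    intro f ψ hψ
    obtain ⟨v, hv, hv0⟩ := Submodule.exists_mem_ne_zero_of_ne_bot hψ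
    set w : (V →ₗ[k] V)ˣ := ρ (SemidirectProduct.inr f) with hw
    show W (θ (ψ.comp (φ f⁻¹).toMonoidHom)) ≠ ⊥
    refine (Submodule.ne_bot_iff _).mpr ⟨(w : V →ₗ[k] V) v, ?_, ?_⟩
    · rw [Submodule.mem_iInf]
      intro d
      rw [Module.End.mem_eigenspace_iff]
      have h1 := SemidirectProduct.inl_aut (φ := φ) f ((φ f⁻¹) d)
      rw [hφcancel f d] at h1
      have hgrp : SemidirectProduct.inl (φ := φ) d * SemidirectProduct.inr f
          = SemidirectProduct.inr f * SemidirectProduct.inl ((φ f⁻¹) d) := by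
        rw [h1]
        simp only [mul_assoc, ← map_mul, inv_mul_cancel, map_one, mul_one]
      have hu1 : u d * w = w * u ((φ f⁻¹) d) := by
        rw [hu, hw]
        simp only [MonoidHom.comp_apply]
        rw [← map_mul, ← map_mul, hgrp]
      have h2 : (u d : V →ₗ[k] V) * (w : V →ₗ[k] V)
          = (w : V →ₗ[k] V) * (u ((φ f⁻¹) d) : V →ₗ[k] V) := by
        rw [← Units.val_mul, ← Units.val_mul, hu1]
      have h2' := congrArg (fun g : V →ₗ[k] V => g v) h2
      simp only [Module.End.mul_apply] at h2'
      have h3 : E ((φ f⁻¹) d) v = ((ψ ((φ f⁻¹) d) : kˣ) : k) • v :=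
        Module.End.mem_eigenspace_iff.mp ((Submodule.mem_iInf _).mp hv ((φ f⁻¹) d))
      show E d ((w : V →ₗ[k] V) v) = _
      rw [hE]
      simp only
      rw [h2']
      rw [hE] at h3
      simp only at h3
      rw [h3, map_smul]
      rfl
    · intro h0
      apply hv0
      have hv' : ((w⁻¹ * w : (V →ₗ[k] V)ˣ) : V →ₗ[k] V) v = 0 := by
        rw [Units.val_mul, Module.End.mul_apply, h0, map_zero]
      rw [inv_mul_cancel w] at hv'
      simpa using hv'
  have hinv : ∀ f : F, (fun χ : D →* kˣ => χ.comp (φ f⁻¹).toMonoidHom) '' Λ = Λ := by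
    intro f
    apply Set.eq_of_subset_of_subset
    · rintro _ ⟨ψ, hψ, rfl⟩
      exact hstep f ψ hψ
    · intro ψ hψ
      refine ⟨ψ.comp (φ f⁻¹⁻¹).toMonoidHom, hstep f⁻¹ ψ hψ, ?_⟩
      refine MonoidHom.ext fun d => ?_
      show ψ ((φ f⁻¹⁻¹) ((φ f⁻¹) d)) = ψ d
      congr 1
      rw [inv_inv]
      exact hφcancel f d
  exact ⟨⟨Λ, hinv, hcard, hclosure⟩, fun d hd => le_trans (hd Λ hinv hclosure) hcard⟩
end

section
/- Let p be a prime, r ≥ 2, and n = p^r. For i = 1, …, p let B_i = {(i−1)p^{r−1}+1, …, i·p^{r−1}} (the i-th big block). Let Λ = {a_{α,β} : α ∈ B_i and β ∈ B_j with j − i ≡ 1 (mod p)} ⊆ L_n. Then Λ generates L_n as an abelian group, and |Λ| = p^{2r−1}. -/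
/-- The vector `a_{α,β} ∈ ℤ^n` (positions `0`-indexed) with entry `1` in position
`α`, entry `-1` in position `β`, and `0` elsewhere. -/
def stdVecN (n : ℕ) (a b : ℕ) : Fin n → ℤ :=
  fun h => if h.val = a then 1 else if h.val = b then -1 else 0

lemma stdVec_eq_single {n a b : ℕ} (ha : a < n) (hb : b < n) (hab : a ≠ b) :
    stdVecN n a b = Pi.single (⟨a, ha⟩ : Fin n) 1 - Pi.single (⟨b, hb⟩ : Fin n) 1 := by
  funext i
  simp only [stdVecN, Pi.sub_apply, Pi.single_apply, Fin.ext_iff]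
  split_ifs <;> omega

lemma stdVec_inj {n a b a' b' : ℕ} (ha : a < n) (hb : b < n) (hab : a ≠ b) (hab' : a' ≠ b')
    (h : stdVecN n a b = stdVecN n a' b') : a = a' ∧ b = b' := by
  have e1 := congrFun h ⟨a, ha⟩
  have e2 := congrFun h ⟨b, hb⟩
  simp only [stdVecN, Fin.val_mk] at e1 e2
  split_ifs at e1 e2 <;> omega

lemma key_ne {p : ℕ} (hp : 1 < p) : ∀ x : ℕ, x < p → x % p ≠ (x + 1) % p := by
  intro x hx h
  rw [Nat.mod_eq_of_lt hx] at h
  rcases Nat.lt_or_ge (x + 1) p with h1 | h1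
  · rw [Nat.mod_eq_of_lt h1] at h; omega
  · have hxp : x + 1 = p := by omega
    rw [hxp, Nat.mod_self] at h; omega

lemma count_lemma {p q n : ℕ} (hp : 1 < p) (hq0 : 0 < q) (hn : n = p * q) :
    ((Finset.range n ×ˢ Finset.range n).filter
      (fun ab => (ab.2 / q) % p = (ab.1 / q + 1) % p)).card = n * q := by
  have key : (Finset.range n ×ˢ Finset.range q).card =
      ((Finset.range n ×ˢ Finset.range n).filter
        (fun ab => (ab.2 / q) % p = (ab.1 / q + 1) % p)).card := by
    apply Finset.card_bij' (i := fun ab _ => ((ab.1, ((ab.1 / q + 1) % p) * q + ab.2) : ℕ × ℕ))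
      (j := fun ab _ => ((ab.1, ab.2 % q) : ℕ × ℕ))
    · -- hi : maps into filter
      rintro ⟨a, k⟩ hmem
      simp only [Finset.mem_product, Finset.mem_range] at hmem
      obtain ⟨ha, hk⟩ := hmem
      simp only [Finset.mem_filter, Finset.mem_product, Finset.mem_range]
      have hj0 : (a / q + 1) % p < p := Nat.mod_lt _ (by omega)
      refine ⟨⟨ha, ?_⟩, ?_⟩
      · calc ((a / q + 1) % p) * q + k < ((a / q + 1) % p) * q + q := by omega
          _ ≤ p * q := by
            rw [← Nat.succ_mul]
            exact Nat.mul_le_mul_right q hj0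
          _ = n := hn.symm
      · rw [mul_comm ((a / q + 1) % p) q, Nat.mul_add_div hq0, Nat.div_eq_of_lt hk,
          Nat.add_zero, Nat.mod_eq_of_lt hj0]
    · -- hj : maps back
      rintro ⟨a, b⟩ hmem
      simp only [Finset.mem_filter, Finset.mem_product, Finset.mem_range] at hmem
      simp only [Finset.mem_product, Finset.mem_range]
      exact ⟨hmem.1.1, Nat.mod_lt _ hq0⟩
    · -- left inverse
      rintro ⟨a, k⟩ hmem
      simp only [Finset.mem_product, Finset.mem_range] at hmem
      simp only [Prod.mk.injEq]
      refine ⟨trivial, ?_⟩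
      rw [mul_comm ((a / q + 1) % p) q, Nat.mul_add_mod]
      exact Nat.mod_eq_of_lt hmem.2
    · -- right inverse
      rintro ⟨a, b⟩ hmem
      simp only [Finset.mem_filter, Finset.mem_product, Finset.mem_range] at hmem
      obtain ⟨⟨ha, hb⟩, hcond⟩ := hmem
      have hbq : b / q < p := by
        rw [Nat.div_lt_iff_lt_mul hq0]; omega
      have hbd : b / q = (a / q + 1) % p := by
        rw [← Nat.mod_eq_of_lt hbq]; exact hcond
      simp only [Prod.mk.injEq]
      exact ⟨trivial, by rw [← hbd, Nat.div_add_mod']⟩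
  rw [← key, Finset.card_product, Finset.card_range, Finset.card_range]

/-- Let `p` be a prime, `r ≥ 2`, `n = p^r`.  Subdivide the positions
(`0`-indexed, so position `x` corresponds to the integer `x+1`) into `p` big blocks
of length `p^(r-1)`; position `x` lies in the (`0`-indexed) big block `x / p^(r-1)`.
Let `Λ = {a_{α,β} : the block of β ≡ the block of α + 1 (mod p)}`.  Then `Λ`
generates `L_n = {a ∈ ℤ^n : ∑ aᵢ = 0}` as an abelian group, and `|Λ| = p^(2r-1)`. -/
theorem stmt_5 (p r n : ℕ) (hp : p.Prime) (hr : 2 ≤ r) (hn : n = p ^ r)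
    (Λ : Set (Fin n → ℤ))
    (hΛ : Λ = {v | ∃ a b : ℕ, a < n ∧ b < n ∧
      (b / p ^ (r - 1)) % p = (a / p ^ (r - 1) + 1) % p ∧ v = stdVecN n a b}) :
    (AddSubgroup.closure Λ : Set (Fin n → ℤ)) = {a : Fin n → ℤ | ∑ i, a i = 0} ∧
    Λ.ncard = p ^ (2 * r - 1) := by
    classical
  have hp1 : 1 < p := hp.one_lt
  set q := p ^ (r - 1) with hq
  have hq0 : 0 < q := pow_pos hp.pos _
  have hnpq : n = p * q := by
    rw [hn, hq, ← pow_succ']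
    congr 1
    omega
  have hrw : 2 * r - 1 = r + (r - 1) := by omega
  have hfinal : n * q = p ^ (2 * r - 1) := by
    rw [hn, hq, hrw, pow_add]
  clear_value q
  clear hq hn
  have hn0 : 0 < n := by rw [hnpq]; positivity
  -- blocks
  have hdiv : ∀ a : ℕ, a < n → a / q < p := by
    intro a ha
    rw [Nat.div_lt_iff_lt_mul hq0]
    omega
  have hblocks : ∀ a b : ℕ, a < n → b < n →
      (b / q) % p = (a / q + 1) % p → a ≠ b := by
    intro a b ha hb h hab
    subst hab
    exact key_ne hp1 (a / q) (hdiv a ha) h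
  -- generators
  have gen : ∀ a b : ℕ, ∀ (ha : a < n) (hb : b < n),
      (b / q) % p = (a / q + 1) % p →
      Pi.single (⟨a, ha⟩ : Fin n) (1 : ℤ) - Pi.single ⟨b, hb⟩ 1 ∈
        AddSubgroup.closure Λ := by
    intro a b ha hb h
    rw [← stdVec_eq_single ha hb (hblocks a b ha hb h)]
    exact AddSubgroup.subset_closure (by rw [hΛ]; exact ⟨a, b, ha, hb, h, rfl⟩)
  -- chains
  have chain : ∀ d : ℕ, 0 < d → ∀ a b : ℕ, ∀ (ha : a < n) (hb : b < n),
      (b / q) % p = (a / q + d) % p →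
      Pi.single (⟨a, ha⟩ : Fin n) (1 : ℤ) - Pi.single ⟨b, hb⟩ 1 ∈
        AddSubgroup.closure Λ := by
    intro d
    induction d with
    | zero => omega
    | succ d ih =>
      intro _ a b ha hb hmod
      rcases Nat.eq_zero_or_pos d with rfl | hd
      · exact gen a b ha hb hmod
      · set c := ((a / q + d) % p) * q with hc
        have hcp : (a / q + d) % p < p := Nat.mod_lt _ hp.pos
        have hcn : c < n := by
          rw [hnpq, hc]
          exact (Nat.mul_lt_mul_right hq0).mpr hcp
        have hcq : c / q = (a / q + d) % p := Nat.mul_div_cancel _ hq0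
        have h1 := ih hd a c ha hcn (by rw [hcq, Nat.mod_mod_of_dvd _ dvd_rfl])
        have h2 := gen c b hcn hb (by rw [hcq, Nat.mod_add_mod]; exact hmod)
        have h3 := add_mem h1 h2
        rwa [sub_add_sub_cancel] at h3
  have pair : ∀ a b : Fin n, Pi.single a (1 : ℤ) - Pi.single b 1 ∈
      AddSubgroup.closure Λ := by
    intro a b
    have hap : (a : ℕ) / q < p := hdiv _ a.2
    have hbp : (b : ℕ) / q < p := hdiv _ b.2
    have hab' : (a : ℕ) / q < (b : ℕ) / q + p :=
      lt_of_lt_of_le hap (Nat.le_add_left p _)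
    have hd : 0 < (b : ℕ) / q + p - (a : ℕ) / q := Nat.sub_pos_of_lt hab'
    have hmod : ((b : ℕ) / q) % p =
        ((a : ℕ) / q + ((b : ℕ) / q + p - (a : ℕ) / q)) % p := by
      have he : (a : ℕ) / q + ((b : ℕ) / q + p - (a : ℕ) / q) = (b : ℕ) / q + p :=
        Nat.add_sub_cancel' (le_of_lt hab')
      rw [he, Nat.add_mod_right, Nat.mod_eq_of_lt hbp]
    have := chain _ hd a b a.2 b.2 hmod
    simpa using this
  constructor
  · ext v
    simp only [SetLike.mem_coe, Set.mem_setOf_eq]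
    constructor
    · intro hv
      let σ : (Fin n → ℤ) →+ ℤ :=
        { toFun := fun v => ∑ i, v i
          map_zero' := by simp
          map_add' := by intro x y; simp [Finset.sum_add_distrib] }
      have hle : AddSubgroup.closure Λ ≤ σ.ker := by
        rw [AddSubgroup.closure_le]
        intro w hw
        rw [hΛ] at hw
        obtain ⟨a, b, ha, hb, hcond, rfl⟩ := hw
        have hsum : ∑ i, stdVecN n a b i = 0 := by
          rw [stdVec_eq_single ha hb (hblocks a b ha hb hcond)]
          simp [Pi.sub_apply, Finset.sum_sub_distrib, Finset.sum_pi_single']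
        exact hsum
      exact hle hv
    · intro hv
      have hrepr : ∑ i : Fin n, v i • (Pi.single i (1 : ℤ) - Pi.single ⟨0, hn0⟩ 1) = v := by
        simp only [smul_sub, Finset.sum_sub_distrib, ← Finset.sum_smul, hv, zero_smul,
          sub_zero]
        funext j
        simp [Finset.sum_apply, Pi.single_apply, mul_ite]
      rw [← hrepr]
      exact sum_mem fun i _ => AddSubgroup.zsmul_mem _ (pair i ⟨0, hn0⟩) _
  · -- cardinality
    set T : Finset (ℕ × ℕ) := (Finset.range n ×ˢ Finset.range n).filter
      (fun ab => (ab.2 / q) % p = (ab.1 / q + 1) % p) with hT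
    have hΛeq : Λ = ↑(T.image (fun ab => stdVecN n ab.1 ab.2)) := by
      rw [hΛ]
      ext v
      simp only [Finset.coe_image, Set.mem_image, Finset.mem_coe, hT, Finset.mem_filter,
        Finset.mem_product, Finset.mem_range, Set.mem_setOf_eq]
      constructor
      · rintro ⟨a, b, ha, hb, hcond, rfl⟩
        exact ⟨(a, b), ⟨⟨ha, hb⟩, hcond⟩, rfl⟩
      · rintro ⟨⟨a, b⟩, ⟨⟨ha, hb⟩, hcond⟩, rfl⟩
        exact ⟨a, b, ha, hb, hcond, rfl⟩
    have hinj : Set.InjOn (fun ab : ℕ × ℕ => stdVecN n ab.1 ab.2) T := by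
      rintro ⟨a, b⟩ hab ⟨a', b'⟩ hab' heq
      simp only [hT, Finset.coe_filter, Finset.mem_product, Finset.mem_range,
        Set.mem_setOf_eq, Finset.mem_coe] at hab hab'
      obtain ⟨⟨ha, hb⟩, hc⟩ := hab
      obtain ⟨⟨ha', hb'⟩, hc'⟩ := hab'
      have := stdVec_inj ha hb (hblocks a b ha hb hc) (hblocks a' b' ha' hb' hc') heq
      exact Prod.ext this.1 this.2
    rw [hΛeq, Set.ncard_coe_finset, Finset.card_image_of_injOn hinj, hT,
      count_lemma hp1 hq0 hnpq, hfinal]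
end

section
/- Let p be a prime, r ≥ 2, n = p^r, and let Λ = {a_{α,β} : α ∈ B_i and β ∈ B_j with j − i ≡ 1 (mod p)} ⊆ L_n, where B_i = {(i−1)p^{r−1}+1, …, i·p^{r−1}} for i = 1, …, p. Let ℤ[Λ] be the free abelian group on the set Λ and φ : ℤ[Λ] → L_n the group homomorphism sending the basis element corresponding to λ ∈ Λ to λ. Let σ ∈ S_n be the product of the p^{r−1} disjoint p-cycles (1 2 ⋯ p)(p+1 ⋯ 2p)⋯(n−p+1 ⋯ n). Then: (i) the coordinate-permutation action of σ on L_n maps Λ onto itself, so σ acts on ℤ[Λ] by permuting the basis elements; and (ii) this action of σ does not fix the kernel of φ pointwise; specifically, the element of ker φ given by the sum of the basis elements corresponding to a_{1, p^{r−1}+1}, a_{p^{r−1}+1, 2p^{r−1}+1}, …, a_{(p−1)p^{r−1}+1, 1} is a nonzero element of ker φ not fixed by σ. -/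
/-- The permutation of `{0, …, n-1}` (`p ∣ n`) which cyclically shifts each of the
`n/p` small blocks of `p` consecutive positions: the product of the `n/p` disjoint
`p`-cycles `(1 2 ⋯ p)(p+1 ⋯ 2p)⋯(n-p+1 ⋯ n)` (written `0`-indexed). -/
def blockShift (p n : ℕ) (hp : 0 < p) (hpn : p ∣ n) : Equiv.Perm (Fin n) where
  toFun x := ⟨p * (x.val / p) + (x.val % p + 1) % p, by
    have hc : (x.val % p + 1) % p < p := Nat.mod_lt _ hp
    have hd : x.val / p < n / p := Nat.div_lt_div_of_lt_of_dvd hpn x.isLt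
    calc p * (x.val / p) + (x.val % p + 1) % p < p * (x.val / p) + p := by omega
      _ = p * (x.val / p + 1) := by rw [Nat.mul_succ]
      _ ≤ p * (n / p) := Nat.mul_le_mul (le_refl p) hd
      _ = n := Nat.mul_div_cancel' hpn⟩
  invFun x := ⟨p * (x.val / p) + (x.val % p + (p - 1)) % p, by
    have hc : (x.val % p + (p - 1)) % p < p := Nat.mod_lt _ hp
    have hd : x.val / p < n / p := Nat.div_lt_div_of_lt_of_dvd hpn x.isLt
    calc p * (x.val / p) + (x.val % p + (p - 1)) % p < p * (x.val / p) + p := by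
          omega
      _ = p * (x.val / p + 1) := by rw [Nat.mul_succ]
      _ ≤ p * (n / p) := Nat.mul_le_mul (le_refl p) hd
      _ = n := Nat.mul_div_cancel' hpn⟩
  left_inv x := by
    apply Fin.ext
    have hc : (x.val % p + 1) % p < p := Nat.mod_lt _ hp
    have hb : x.val % p < p := Nat.mod_lt _ hp
    show p * ((p * (x.val / p) + (x.val % p + 1) % p) / p)
        + ((p * (x.val / p) + (x.val % p + 1) % p) % p + (p - 1)) % p = x.val
    rw [Nat.mul_add_div hp, Nat.div_eq_of_lt hc, Nat.add_zero, Nat.mul_add_mod,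
      Nat.mod_eq_of_lt hc, Nat.mod_add_mod]
    have h4 : x.val % p + 1 + (p - 1) = x.val % p + p := by omega
    rw [h4, Nat.add_mod_right, Nat.mod_eq_of_lt hb]
    exact Nat.div_add_mod x.val p
  right_inv x := by
    apply Fin.ext
    have hc : (x.val % p + (p - 1)) % p < p := Nat.mod_lt _ hp
    have hb : x.val % p < p := Nat.mod_lt _ hp
    show p * ((p * (x.val / p) + (x.val % p + (p - 1)) % p) / p)
        + ((p * (x.val / p) + (x.val % p + (p - 1)) % p) % p + 1) % p = x.val
    rw [Nat.mul_add_div hp, Nat.div_eq_of_lt hc, Nat.add_zero, Nat.mul_add_mod,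
      Nat.mod_eq_of_lt hc, Nat.mod_add_mod]
    have h4 : x.val % p + (p - 1) + 1 = x.val % p + p := by omega
    rw [h4, Nat.add_mod_right, Nat.mod_eq_of_lt hb]
    exact Nat.div_add_mod x.val p


lemma stdVecN_comp (n : ℕ) (τ : Equiv.Perm (Fin n)) (a b : Fin n) :
    stdVecN n a.val b.val ∘ ⇑τ = stdVecN n (τ⁻¹ a).val (τ⁻¹ b).val := by
  funext h
  have ha : ((τ h).val = a.val) ↔ (h.val = (τ⁻¹ a).val) := by
    rw [Fin.val_eq_val, Fin.val_eq_val, Equiv.Perm.inv_def,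
      Equiv.apply_eq_iff_eq_symm_apply]
  have hb : ((τ h).val = b.val) ↔ (h.val = (τ⁻¹ b).val) := by
    rw [Fin.val_eq_val, Fin.val_eq_val, Equiv.Perm.inv_def,
      Equiv.apply_eq_iff_eq_symm_apply]
  simp only [Function.comp_apply, stdVecN, ha, hb]

lemma stdVecN_inj {n a b a' b' : ℕ} (ha : a < n) (hb : b < n) (hab : a ≠ b)
    (h : stdVecN n a b = stdVecN n a' b') : a = a' ∧ b = b' := by
  constructor
  · by_contra hne
    have h1 := congrFun h ⟨a, ha⟩
    simp only [stdVecN] at h1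
    split_ifs at h1 <;> omega
  · by_contra hne
    have h1 := congrFun h ⟨b, hb⟩
    simp only [stdVecN] at h1
    split_ifs at h1 <;> omega

lemma succ_mod_ne {p t : ℕ} (hp : 2 ≤ p) (ht : t < p) : (t + 1) % p ≠ t := by
  rcases Nat.lt_or_ge (t + 1) p with h | h
  · rw [Nat.mod_eq_of_lt h]; omega
  · have h1 : t + 1 = p := by omega
    rw [h1, Nat.mod_self]; omega

lemma stdVecN_eq_sub (n a b : ℕ) (hab : a ≠ b) :
    stdVecN n a b = (fun h : Fin n => if h.val = a then (1:ℤ) else 0)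
      - (fun h : Fin n => if h.val = b then (1:ℤ) else 0) := by
  funext h
  simp only [stdVecN, Pi.sub_apply]
  split_ifs with h1 h2 <;> omega

lemma sum_std_zero (n p q : ℕ) (hp : 2 ≤ p) (hq : 0 < q) :
    ∑ t ∈ Finset.range p, stdVecN n (t * q) ((t + 1) % p * q) = 0 := by
  have hrw : ∀ t ∈ Finset.range p, stdVecN n (t * q) ((t + 1) % p * q)
      = (fun h : Fin n => if h.val = t * q then (1:ℤ) else 0)
        - (fun h : Fin n => if h.val = (t + 1) % p * q then (1:ℤ) else 0) := by
    intro t ht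
    exact stdVecN_eq_sub n _ _ fun h =>
      succ_mod_ne hp (Finset.mem_range.mp ht) ((Nat.eq_of_mul_eq_mul_right hq h).symm)
  rw [Finset.sum_congr rfl hrw, Finset.sum_sub_distrib, sub_eq_zero]
  apply Finset.sum_nbij' (i := fun s => (s + (p - 1)) % p) (j := fun t => (t + 1) % p)
  · intro a _; exact Finset.mem_range.mpr (Nat.mod_lt _ (by omega))
  · intro a _; exact Finset.mem_range.mpr (Nat.mod_lt _ (by omega))
  · intro a ha
    rw [Nat.mod_add_mod, show a + (p - 1) + 1 = a + p by omega, Nat.add_mod_right,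
      Nat.mod_eq_of_lt (Finset.mem_range.mp ha)]
  · intro a ha
    rw [Nat.mod_add_mod, show a + 1 + (p - 1) = a + p by omega, Nat.add_mod_right,
      Nat.mod_eq_of_lt (Finset.mem_range.mp ha)]
  · intro a ha
    rw [Nat.mod_add_mod, show a + (p - 1) + 1 = a + p by omega, Nat.add_mod_right,
      Nat.mod_eq_of_lt (Finset.mem_range.mp ha)]

lemma shift_div (p k x m : ℕ) (hp : 0 < p) (hm : m < p) :
    (p * (x / p) + m) / (p * k) = x / (p * k) := by
  rw [← Nat.div_div_eq_div_mul, ← Nat.div_div_eq_div_mul, Nat.mul_add_div hp,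
    Nat.div_eq_of_lt hm, Nat.add_zero]

/-- Let `p` be a prime, `r ≥ 2`, `n = p^r`, and let
`Λ = {a_{α,β} : block(β) ≡ block(α) + 1 (mod p)} ⊆ L_n` (big blocks of length
`p^(r-1)`, positions `0`-indexed).  The free abelian group `ℤ[Λ]` is encoded as the
finitely supported functions `(Fin n → ℤ) →₀ ℤ` with support contained in `Λ`, and
`φ : ℤ[Λ] → L_n` is `f ↦ ∑_λ f(λ)·λ`.  Let `σ ∈ S_n` be the product of the
`p^(r-1)` disjoint `p`-cycles `(1 2 ⋯ p)(p+1 ⋯ 2p)⋯(n-p+1 ⋯ n)`, acting on vectors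
by `(σ·v)_i = v_{σ⁻¹(i)}` and on `ℤ[Λ]` by permuting basis elements (i.e. by
`Finsupp.mapDomain`), and let `w ∈ ℤ[Λ]` be the sum of the basis elements
corresponding to `a_{1, p^(r-1)+1}, a_{p^(r-1)+1, 2p^(r-1)+1}, …,
a_{(p-1)p^(r-1)+1, 1}` (written `0`-indexed).  Then: (i) the action of `σ` maps `Λ`
onto itself; and (ii) `w` is supported in `Λ`, lies in `ker φ`, is nonzero, and is
not fixed by `σ`. -/
theorem stmt_6 (p r n : ℕ) (hp : p.Prime) (hr : 2 ≤ r) (hn : n = p ^ r)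
    (hpn : p ∣ n)
    (σ : Equiv.Perm (Fin n)) (hσ : σ = blockShift p n hp.pos hpn)
    (Λ : Set (Fin n → ℤ))
    (hΛ : Λ = {v | ∃ a b : ℕ, a < n ∧ b < n ∧
      (b / p ^ (r - 1)) % p = (a / p ^ (r - 1) + 1) % p ∧ v = stdVecN n a b})
    (w : (Fin n → ℤ) →₀ ℤ)
    (hw : w = ∑ t ∈ Finset.range p,
      Finsupp.single (stdVecN n (t * p ^ (r - 1)) (((t + 1) % p) * p ^ (r - 1))) 1) :
    (fun v : Fin n → ℤ => v ∘ ⇑σ⁻¹) '' Λ = Λ ∧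
    ↑w.support ⊆ Λ ∧
    w.sum (fun v c => c • v) = 0 ∧
    w ≠ 0 ∧
    Finsupp.mapDomain (fun v : Fin n → ℤ => v ∘ ⇑σ⁻¹) w ≠ w := by
  have hp2 : 2 ≤ p := hp.two_le
  have hq0 : 0 < p ^ (r - 1) := Nat.pow_pos hp.pos
  set q := p ^ (r - 1) with hqdef
  have hq : q = p * p ^ (r - 2) := by
    rw [hqdef, ← pow_succ']; congr 1; omega
  have hnpq : n = p * q := by
    rw [hn, hqdef, ← pow_succ']; congr 1; omega
  have hpq : p ∣ q := hq ▸ Dvd.intro _ rfl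
  have hσval : ∀ x : Fin n, (σ x).val = p * (x.val / p) + (x.val % p + 1) % p := by
    intro x; rw [hσ]; rfl
  have hσinvval : ∀ x : Fin n,
      (σ⁻¹ x).val = p * (x.val / p) + (x.val % p + (p - 1)) % p := by
    intro x; rw [hσ]; rfl
  have hblk : ∀ x : Fin n, (σ x).val / q = x.val / q := by
    intro x
    rw [hσval, hq, shift_div _ _ _ _ hp.pos (Nat.mod_lt _ hp.pos)]
  have hblkinv : ∀ x : Fin n, (σ⁻¹ x).val / q = x.val / q := by
    intro x
    rw [hσinvval, hq, shift_div _ _ _ _ hp.pos (Nat.mod_lt _ hp.pos)]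
  -- membership preservation
  have hmem : ∀ τ : Equiv.Perm (Fin n), (∀ x : Fin n, (τ⁻¹ x).val / q = x.val / q) →
      ∀ v ∈ Λ, v ∘ ⇑τ ∈ Λ := by
    intro τ hτ v hv
    rw [hΛ] at hv ⊢
    obtain ⟨a, b, ha, hb, hcond, rfl⟩ := hv
    refine ⟨(τ⁻¹ ⟨a, ha⟩).val, (τ⁻¹ ⟨b, hb⟩).val, (τ⁻¹ ⟨a, ha⟩).isLt,
      (τ⁻¹ ⟨b, hb⟩).isLt, ?_, ?_⟩
    · rw [hτ ⟨a, ha⟩, hτ ⟨b, hb⟩]; exact hcond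
    · exact stdVecN_comp n τ ⟨a, ha⟩ ⟨b, hb⟩
  refine ⟨?_, ?_, ?_, ?_, ?_⟩
  · -- (i) image of Λ is Λ
    apply Set.Subset.antisymm
    · rintro x ⟨v, hv, rfl⟩
      exact hmem σ⁻¹ (by simpa using hblk) v hv
    · intro v hv
      refine ⟨v ∘ ⇑σ, hmem σ hblkinv v hv, ?_⟩
      funext h
      simp [Function.comp]
  · -- support ⊆ Λ
    intro v hv
    obtain ⟨t, ht, hvt⟩ := Finsupp.mem_support_finset_sum v (by rw [← hw]; exact hv)
    have hveq : v = stdVecN n (t * q) ((t + 1) % p * q) :=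
      Finset.mem_singleton.mp (Finsupp.support_single_subset hvt)
    rw [hΛ, hveq]
    refine ⟨t * q, (t + 1) % p * q, ?_, ?_, ?_, rfl⟩
    · rw [hnpq]
      exact mul_lt_mul_of_pos_right (Finset.mem_range.mp ht) hq0
    · rw [hnpq]
      exact mul_lt_mul_of_pos_right (Nat.mod_lt _ hp.pos) hq0
    · rw [Nat.mul_div_cancel _ hq0, Nat.mul_div_cancel _ hq0,
        Nat.mod_mod_of_dvd _ (dvd_refl p)]
  · -- kernel
    rw [hw, ← Finsupp.sum_finsetSum_index (h := fun (v : Fin n → ℤ) (c : ℤ) => c • v)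
      (fun i => zero_smul ℤ i) (fun i x y => add_smul x y i)]
    have hst : ∀ t ∈ Finset.range p,
        (Finsupp.single (stdVecN n (t * q) ((t + 1) % p * q)) (1:ℤ)).sum
          (fun v c => c • v) = stdVecN n (t * q) ((t + 1) % p * q) := by
      intro t _
      rw [Finsupp.sum_single_index (h := fun (v : Fin n → ℤ) (c : ℤ) => c • v)
        (zero_smul ℤ _), one_smul]
    rw [Finset.sum_congr rfl hst]
    exact sum_std_zero n p q hp2 hq0
  · -- w ≠ 0
    intro h0
    have h1 := DFunLike.congr_fun h0 (stdVecN n 0 q)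
    rw [hw, Finset.sum_apply'] at h1
    have hside : ∀ t ∈ Finset.range p, t ≠ 0 →
        (Finsupp.single (stdVecN n (t * q) ((t + 1) % p * q)) (1:ℤ)) (stdVecN n 0 q) = 0 := by
      intro t ht hne
      rw [Finsupp.single_apply, if_neg]
      intro heq
      have hab : t * q ≠ (t + 1) % p * q := fun h =>
        succ_mod_ne hp2 (Finset.mem_range.mp ht) ((Nat.eq_of_mul_eq_mul_right hq0 h).symm)
      have htq : t * q < n := by
        rw [hnpq]; exact mul_lt_mul_of_pos_right (Finset.mem_range.mp ht) hq0
      have htq2 : (t + 1) % p * q < n := by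
        rw [hnpq]; exact mul_lt_mul_of_pos_right (Nat.mod_lt _ hp.pos) hq0
      have := (stdVecN_inj htq htq2 hab heq).1
      exact hne ((Nat.mul_eq_zero.mp this).resolve_right (by omega))
    rw [Finset.sum_eq_single_of_mem 0 (Finset.mem_range.mpr (by omega)) hside] at h1
    rw [show (0 + 1) % p = 1 from Nat.mod_eq_of_lt (by omega),
      Nat.zero_mul, Nat.one_mul, Finsupp.single_apply, if_pos rfl] at h1
    simp at h1
  · -- not fixed by σ
    intro hfix
    -- value of w at stdVecN n 0 q is 1
    have hwval : w (stdVecN n 0 q) = 1 := by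
      rw [hw, Finset.sum_apply']
      have hside : ∀ t ∈ Finset.range p, t ≠ 0 →
          (Finsupp.single (stdVecN n (t * q) ((t + 1) % p * q)) (1:ℤ)) (stdVecN n 0 q) = 0 := by
        intro t ht hne
        rw [Finsupp.single_apply, if_neg]
        intro heq
        have hab : t * q ≠ (t + 1) % p * q := fun h =>
          succ_mod_ne hp2 (Finset.mem_range.mp ht) ((Nat.eq_of_mul_eq_mul_right hq0 h).symm)
        have htq : t * q < n := by
          rw [hnpq]; exact mul_lt_mul_of_pos_right (Finset.mem_range.mp ht) hq0
        have htq2 : (t + 1) % p * q < n := by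
          rw [hnpq]; exact mul_lt_mul_of_pos_right (Nat.mod_lt _ hp.pos) hq0
        have := (stdVecN_inj htq htq2 hab heq).1
        exact hne ((Nat.mul_eq_zero.mp this).resolve_right (by omega))
      rw [Finset.sum_eq_single_of_mem 0 (Finset.mem_range.mpr (by omega)) hside]
      rw [show (0 + 1) % p = 1 from Nat.mod_eq_of_lt (by omega),
        Nat.zero_mul, Nat.one_mul, Finsupp.single_apply, if_pos rfl]
    have hmval : Finsupp.mapDomain (fun v : Fin n → ℤ => v ∘ ⇑σ⁻¹) w (stdVecN n 0 q)
        = 0 := by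
      rw [hw, Finsupp.mapDomain_finset_sum]
      simp only [Finsupp.mapDomain_single]
      rw [Finset.sum_apply']
      apply Finset.sum_eq_zero
      intro t ht
      rw [Finsupp.single_apply, if_neg]
      intro heq
      have htq : t * q < n := by
        rw [hnpq]; exact mul_lt_mul_of_pos_right (Finset.mem_range.mp ht) hq0
      have htq2 : (t + 1) % p * q < n := by
        rw [hnpq]; exact mul_lt_mul_of_pos_right (Nat.mod_lt _ hp.pos) hq0
      have hc := stdVecN_comp n σ⁻¹ ⟨t * q, htq⟩ ⟨(t + 1) % p * q, htq2⟩
      rw [inv_inv] at hc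
      rw [hc] at heq
      have hab : t * q ≠ (t + 1) % p * q := fun h =>
        succ_mod_ne hp2 (Finset.mem_range.mp ht) ((Nat.eq_of_mul_eq_mul_right hq0 h).symm)
      have habσ : (σ ⟨t * q, htq⟩).val ≠ (σ ⟨(t + 1) % p * q, htq2⟩).val := by
        intro h
        exact hab (congrArg Fin.val (σ.injective (Fin.val_injective h)))
      have h1 := (stdVecN_inj (Fin.isLt _) (Fin.isLt _) habσ heq).1
      -- compute (σ ⟨t*q⟩).val = t*q + 1
      have hmod : (t * q) % p = 0 := Nat.mod_eq_zero_of_dvd (hpq.mul_left t)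
      have hval : (σ ⟨t * q, htq⟩).val = t * q + 1 := by
        rw [hσval]
        simp only [hmod, Nat.zero_add]
        rw [Nat.mod_eq_of_lt (by omega : 1 < p),
          Nat.mul_div_cancel' (hpq.mul_left t)]
      omega
    rw [hfix, hwval] at hmval
    exact one_ne_zero hmval
end

section
/- Let p be a prime, q = p^e a power of p with e ≥ 1, m a positive integer, and n = mp. For i = 1, …, m let b_i = {(i−1)p+1, …, ip} and let σ_i ∈ S_n be the p-cycle ((i−1)p+1, (i−1)p+2, …, ip), fixing all other points. Let Σ : X_n(q) → X_m(q) be the group homomorphism sending a = (a_1,…,a_n) to (s_1,…,s_m), where s_i = a_{(i−1)p+1} + a_{(i−1)p+2} + ⋯ + a_{ip}. Suppose Λ ⊆ X_n(q) is invariant under σ_i for every i = 1, …, m. If s ∈ Σ(Λ) has at least two entries that are not divisible by p in ℤ/qℤ (i.e., not of the form p·c with c ∈ ℤ/qℤ), then the fiber {a ∈ Λ : Σ(a) = s} contains at least p² elements. -/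
def sigmaMap (p m q : ℕ) : (Fin (m * p) → ZMod q) → (Fin m → ZMod q) :=
  fun a j => ∑ t : Fin p, a ⟨p * j.val + t.val, by
    have h1 : t.val < p := t.isLt
    have h2 : j.val < m := j.isLt
    calc p * j.val + t.val < p * (j.val + 1) := by rw [Nat.mul_succ]; omega
      _ ≤ p * m := Nat.mul_le_mul (le_refl p) (by omega)
      _ = m * p := Nat.mul_comm p m⟩

namespace Stmt7

variable {p m q : ℕ}

def idx (p : ℕ) {m : ℕ} [NeZero p] (j : Fin m) (z : ZMod p) : Fin (m * p) :=
  ⟨p * j.val + z.val, by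
    have h1 : z.val < p := ZMod.val_lt z
    have h2 : j.val < m := j.isLt
    calc p * j.val + z.val < p * (j.val + 1) := by rw [Nat.mul_succ]; omega
      _ ≤ p * m := Nat.mul_le_mul (le_refl p) (by omega)
      _ = m * p := Nat.mul_comm p m⟩

lemma idx_div [NeZero p] (j : Fin m) (z : ZMod p) : (idx p j z).val / p = j.val := by
  have hp : 0 < p := Nat.pos_of_ne_zero (NeZero.ne p)
  show (p * j.val + z.val) / p = j.val
  rw [Nat.mul_add_div hp, Nat.div_eq_of_lt (ZMod.val_lt z), Nat.add_zero]

variable (σ : Fin m → Equiv.Perm (Fin (m * p)))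

lemma fix_off
    (hσ : ∀ (i : Fin m) (x : Fin (m * p)), ((σ i) x).val =
      if x.val / p = i.val then p * i.val + (x.val % p + 1) % p else x.val)
    (i : Fin m) (x : Fin (m * p)) (h : x.val / p ≠ i.val) : σ i x = x :=
  Fin.ext (by rw [hσ i x, if_neg h])

lemma rot (hp : p.Prime) [NeZero p]
    (hσ : ∀ (i : Fin m) (x : Fin (m * p)), ((σ i) x).val =
      if x.val / p = i.val then p * i.val + (x.val % p + 1) % p else x.val)
    (i : Fin m) (z : ZMod p) :
    σ i (idx p i z) = idx p i (z + 1) := by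
  haveI : Fact (1 < p) := ⟨hp.one_lt⟩
  apply Fin.ext
  rw [hσ, if_pos (idx_div i z)]
  show p * i.val + ((p * i.val + z.val) % p + 1) % p = p * i.val + (z + 1).val
  congr 1
  rw [Nat.mul_add_mod, Nat.mod_eq_of_lt (ZMod.val_lt z), ZMod.val_add, ZMod.val_one]

lemma pow_idx (hp : p.Prime) [NeZero p]
    (hσ : ∀ (i : Fin m) (x : Fin (m * p)), ((σ i) x).val =
      if x.val / p = i.val then p * i.val + (x.val % p + 1) % p else x.val)
    (i : Fin m) (k : ℕ) : ∀ z : ZMod p, (σ i ^ k) (idx p i z) = idx p i (z + k) := by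
  induction k with
  | zero => intro z; simp
  | succ k ih =>
    intro z
    rw [pow_succ, Equiv.Perm.mul_apply, rot σ hp hσ, ih]
    congr 1; push_cast; ring

lemma pow_off
    (hσ : ∀ (i : Fin m) (x : Fin (m * p)), ((σ i) x).val =
      if x.val / p = i.val then p * i.val + (x.val % p + 1) % p else x.val)
    (i : Fin m) (k : ℕ) (x : Fin (m * p)) (h : x.val / p ≠ i.val) : (σ i ^ k) x = x := by
  induction k with
  | zero => simp
  | succ k ih => rw [pow_succ, Equiv.Perm.mul_apply, fix_off σ hσ i x h, ih]

lemma inv_pow_idx (hp : p.Prime) [NeZero p]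
    (hσ : ∀ (i : Fin m) (x : Fin (m * p)), ((σ i) x).val =
      if x.val / p = i.val then p * i.val + (x.val % p + 1) % p else x.val)
    (i : Fin m) (k : ℕ) (z : ZMod p) :
    ((σ i ^ k)⁻¹) (idx p i z) = idx p i (z - k) := by
  rw [Equiv.Perm.inv_eq_iff_eq, pow_idx σ hp hσ, sub_add_cancel]

lemma inv_pow_off
    (hσ : ∀ (i : Fin m) (x : Fin (m * p)), ((σ i) x).val =
      if x.val / p = i.val then p * i.val + (x.val % p + 1) % p else x.val)
    (i : Fin m) (k : ℕ) (x : Fin (m * p)) (h : x.val / p ≠ i.val) :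
    ((σ i ^ k)⁻¹) x = x := by
  rw [Equiv.Perm.inv_eq_iff_eq]
  exact (pow_off σ hσ i k x h).symm

lemma sigma_sum [NeZero p] (c : Fin (m * p) → ZMod q) (j : Fin m) :
    sigmaMap p m q c j = ∑ z : ZMod p, c (idx p j z) := by
  unfold sigmaMap
  refine Fintype.sum_equiv
    ⟨fun t : Fin p => ((t.val : ℕ) : ZMod p), fun z => ⟨z.val, ZMod.val_lt z⟩,
      fun t => Fin.ext (ZMod.val_natCast_of_lt t.isLt),
      fun z => ZMod.natCast_rightInverse z⟩ _ _ (fun t => ?_)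
  show c _ = c (idx p j ((t.val : ℕ) : ZMod p))
  congr 1
  refine Fin.ext ?_
  show p * j.val + t.val = p * j.val + (((t.val : ℕ) : ZMod p)).val
  rw [ZMod.val_natCast_of_lt t.isLt]

lemma step_sigma (hp : p.Prime) [NeZero p]
    (hσ : ∀ (i : Fin m) (x : Fin (m * p)), ((σ i) x).val =
      if x.val / p = i.val then p * i.val + (x.val % p + 1) % p else x.val)
    (c : Fin (m * p) → ZMod q) (i : Fin m) :
    sigmaMap p m q (c ∘ ⇑(σ i)⁻¹) = sigmaMap p m q c := by
  funext j
  rw [sigma_sum, sigma_sum]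
  by_cases h : j = i
  · subst h
    have h1 : ∀ z : ZMod p, (σ j)⁻¹ (idx p j z) = idx p j (z - 1) := by
      intro z
      have := inv_pow_idx σ hp hσ j 1 z
      rw [pow_one] at this
      simpa using this
    calc ∑ z : ZMod p, (c ∘ ⇑(σ j)⁻¹) (idx p j z)
        = ∑ z : ZMod p, c (idx p j (z - 1)) := by
          refine Finset.sum_congr rfl fun z _ => ?_
          show c ((σ j)⁻¹ (idx p j z)) = _
          rw [h1]
      _ = ∑ z : ZMod p, c (idx p j z) :=
          Fintype.sum_equiv (Equiv.subRight (1 : ZMod p)) _ _ (fun z => rfl)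
  · refine Finset.sum_congr rfl fun z _ => ?_
    show c ((σ i)⁻¹ (idx p j z)) = _
    have := inv_pow_off σ hσ i 1 (idx p j z)
      (by rw [idx_div]; exact fun hv => h (Fin.ext hv))
    rw [pow_one] at this
    rw [this]

lemma comp_pow_succ {α β : Type*} (σ0 : Equiv.Perm α) (c : α → β) (k : ℕ) :
    c ∘ ⇑(σ0 ^ (k + 1))⁻¹ = (c ∘ ⇑(σ0 ^ k)⁻¹) ∘ ⇑σ0⁻¹ := by
  funext x
  simp [pow_succ', mul_inv_rev, Function.comp]

lemma pow_sigma (hp : p.Prime) [NeZero p]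
    (hσ : ∀ (i : Fin m) (x : Fin (m * p)), ((σ i) x).val =
      if x.val / p = i.val then p * i.val + (x.val % p + 1) % p else x.val)
    (c : Fin (m * p) → ZMod q) (i : Fin m) (k : ℕ) :
    sigmaMap p m q (c ∘ ⇑(σ i ^ k)⁻¹) = sigmaMap p m q c := by
  induction k with
  | zero => simp
  | succ k ih => rw [comp_pow_succ, step_sigma σ hp hσ _ i, ih]

lemma const_of_period (hp : p.Prime) {g : ZMod p → ZMod q} {d : ZMod p} (hd : d ≠ 0)
    (hg : ∀ u, g (u + d) = g u) : ∀ u, g u = g 0 := by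
  haveI : Fact p.Prime := ⟨hp⟩
  have h1 : ∀ r : ℕ, g ((r : ZMod p) * d) = g 0 := by
    intro r
    induction r with
    | zero => simp
    | succ r ih =>
      have hr : ((r + 1 : ℕ) : ZMod p) * d = (r : ZMod p) * d + d := by push_cast; ring
      rw [hr, hg, ih]
  intro u
  have h2 : u = (((u * d⁻¹).val : ℕ) : ZMod p) * d := by
    rw [ZMod.natCast_rightInverse (u * d⁻¹), mul_assoc, inv_mul_cancel₀ hd, mul_one]
  rw [h2, h1]

end Stmt7

/-- Let `p` be a prime, `q = p^e` (`e ≥ 1`), `m ≥ 1`, `n = m·p`.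
For `i` a (`0`-indexed) block index, let `σᵢ ∈ S_n` be the `p`-cycle cyclically
permuting the positions of the `i`-th block `{ip, …, ip+p-1}` (`0`-indexed) and
fixing all other points.  Suppose `Λ ⊆ X_n(q)` is invariant under every `σᵢ`.
If `s ∈ Σ(Λ)` has at least two entries not divisible by `p` in `ℤ/qℤ`, then the
fiber `{a ∈ Λ : Σ(a) = s}` contains at least `p²` elements. -/
theorem stmt_7 (p e q m : ℕ) (hp : p.Prime) (he : 1 ≤ e) (hq : q = p ^ e)
    (hm : 0 < m)
    (σ : Fin m → Equiv.Perm (Fin (m * p)))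
    (hσ : ∀ (i : Fin m) (x : Fin (m * p)),
      ((σ i) x).val =
        if x.val / p = i.val then p * i.val + (x.val % p + 1) % p else x.val)
    (Λ : Set (Fin (m * p) → ZMod q))
    (hΛsub : ∀ a ∈ Λ, ∑ i, a i = 0)
    (hΛinv : ∀ i : Fin m, (fun a : Fin (m * p) → ZMod q => a ∘ ⇑(σ i)⁻¹) '' Λ = Λ)
    (s : Fin m → ZMod q) (hs : s ∈ sigmaMap p m q '' Λ)
    (j₁ j₂ : Fin m) (hj : j₁ ≠ j₂)
    (h1 : ¬ ∃ c : ZMod q, s j₁ = p * c) (h2 : ¬ ∃ c : ZMod q, s j₂ = p * c) :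
    p ^ 2 ≤ {a ∈ Λ | sigmaMap p m q a = s}.ncard := by
  haveI : NeZero p := ⟨hp.pos.ne'⟩
  haveI : Fact p.Prime := ⟨hp⟩
  haveI : NeZero q := ⟨hq ▸ (pow_ne_zero e hp.pos.ne')⟩
  obtain ⟨a, haΛ, has⟩ := hs
  have hj' : j₁.val ≠ j₂.val := fun h => hj (Fin.ext h)
  set F : ZMod p × ZMod p → (Fin (m * p) → ZMod q) :=
    fun kl => (a ∘ ⇑(σ j₁ ^ (kl.1).val)⁻¹) ∘ ⇑(σ j₂ ^ (kl.2).val)⁻¹ with hFdef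
  -- evaluation on block j₁
  have hev1 : ∀ (k l : ZMod p) (z : ZMod p),
      F (k, l) (Stmt7.idx p j₁ z) = a (Stmt7.idx p j₁ (z - k)) := by
    intro k l z
    show a ((σ j₁ ^ k.val)⁻¹ ((σ j₂ ^ l.val)⁻¹ (Stmt7.idx p j₁ z))) = _
    rw [Stmt7.inv_pow_off σ hσ j₂ l.val _
      (by rw [Stmt7.idx_div]; exact hj'),
      Stmt7.inv_pow_idx σ hp hσ j₁ k.val z,
      ZMod.natCast_rightInverse k]
  -- evaluation on block j₂
  have hev2 : ∀ (k l : ZMod p) (z : ZMod p),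
      F (k, l) (Stmt7.idx p j₂ z) = a (Stmt7.idx p j₂ (z - l)) := by
    intro k l z
    show a ((σ j₁ ^ k.val)⁻¹ ((σ j₂ ^ l.val)⁻¹ (Stmt7.idx p j₂ z))) = _
    rw [Stmt7.inv_pow_idx σ hp hσ j₂ l.val z,
      Stmt7.inv_pow_off σ hσ j₁ k.val _
        (by rw [Stmt7.idx_div]; exact fun h => hj' h.symm),
      ZMod.natCast_rightInverse l]
  -- membership in Λ
  have hstep : ∀ c ∈ Λ, ∀ i, c ∘ ⇑(σ i)⁻¹ ∈ Λ := by
    intro c hc i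
    rw [← hΛinv i]
    exact ⟨c, hc, rfl⟩
  have hpowΛ : ∀ (i : Fin m) (k : ℕ), ∀ c ∈ Λ, c ∘ ⇑(σ i ^ k)⁻¹ ∈ Λ := by
    intro i k
    induction k with
    | zero => intro c hc; simpa using hc
    | succ k ih =>
      intro c hc
      rw [Stmt7.comp_pow_succ]
      exact hstep _ (ih c hc) i
  have hmem : ∀ kl, F kl ∈ Λ :=
    fun kl => hpowΛ j₂ kl.2.val _ (hpowΛ j₁ kl.1.val a haΛ)
  have hsig : ∀ kl, sigmaMap p m q (F kl) = s := by
    intro kl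
    show sigmaMap p m q ((a ∘ ⇑(σ j₁ ^ kl.1.val)⁻¹) ∘ ⇑(σ j₂ ^ kl.2.val)⁻¹) = s
    rw [Stmt7.pow_sigma σ hp hσ _ j₂, Stmt7.pow_sigma σ hp hσ _ j₁, has]
  -- divisibility argument
  have key : ∀ (j : Fin m), (¬ ∃ c : ZMod q, s j = p * c) →
      ∀ (k k' : ZMod p), (∀ z : ZMod p,
        a (Stmt7.idx p j (z - k)) = a (Stmt7.idx p j (z - k'))) → k = k' := by
    intro j hnd k k' hkk
    by_contra hne
    set g : ZMod p → ZMod q := fun z => a (Stmt7.idx p j z) with hg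
    have hd : k' - k ≠ 0 := sub_ne_zero.mpr (Ne.symm hne)
    have hper : ∀ u, g (u + (k' - k)) = g u := by
      intro u
      have h := hkk (u + k')
      have e1 : u + k' - k = u + (k' - k) := by ring
      have e2 : u + k' - k' = u := by ring
      rw [e1, e2] at h
      exact h
    have hconst := Stmt7.const_of_period hp hd hper
    apply hnd
    refine ⟨g 0, ?_⟩
    rw [← has, Stmt7.sigma_sum]
    calc ∑ z : ZMod p, g z = ∑ _z : ZMod p, g 0 :=
          Finset.sum_congr rfl (fun z _ => hconst z)
      _ = (Fintype.card (ZMod p)) • g 0 := by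
          rw [Finset.sum_const, Finset.card_univ]
      _ = (p : ZMod q) * g 0 := by rw [ZMod.card, nsmul_eq_mul]
  have hinj : Function.Injective F := by
    rintro ⟨k, l⟩ ⟨k', l'⟩ hEq
    have hk : k = k' := by
      refine key j₁ h1 k k' fun z => ?_
      rw [← hev1 k l z, ← hev1 k' l' z, hEq]
    have hl : l = l' := by
      refine key j₂ h2 l l' fun z => ?_
      rw [← hev2 k l z, ← hev2 k' l' z, hEq]
    simp [hk, hl]
  have hsub : Set.range F ⊆ {a ∈ Λ | sigmaMap p m q a = s} := by
    rintro _ ⟨kl, rfl⟩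
    exact ⟨hmem kl, hsig kl⟩
  have hcard : (Set.range F).ncard = p ^ 2 := by
    rw [← Nat.card_coe_set_eq, Nat.card_range_of_injective hinj,
      Nat.card_eq_fintype_card, Fintype.card_prod, ZMod.card, sq]
  calc p ^ 2 = (Set.range F).ncard := hcard.symm
    _ ≤ _ := Set.ncard_le_ncard hsub (Set.toFinite _)
end

section
/- Let p be a prime, q = p^e a power of p with e ≥ 1, m a positive integer, and n = mp. Let Σ : X_n(q) → X_m(q) be the group homomorphism sending a = (a_1,…,a_n) to (s_1,…,s_m), where s_i = a_{(i−1)p+1} + a_{(i−1)p+2} + ⋯ + a_{ip}. If Λ ⊆ X_n(q) generates X_n(q) as an abelian group, then the set Σ(Λ) \ p·X_m(q), obtained from the image Σ(Λ) by removing all elements that lie in p·X_m(q) = {p·t : t ∈ X_m(q)}, generates X_m(q) as an abelian group. -/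
/-- The equivalence `Fin m × Fin p ≃ Fin (m * p)`, `(j, t) ↦ p * j + t`. -/
def blockEquiv (m p : ℕ) (hp : 0 < p) : Fin m × Fin p ≃ Fin (m * p) where
  toFun x := ⟨p * x.1.val + x.2.val, by
    have h1 : x.2.val < p := x.2.isLt
    have h2 : x.1.val < m := x.1.isLt
    calc p * x.1.val + x.2.val < p * (x.1.val + 1) := by rw [Nat.mul_succ]; omega
      _ ≤ p * m := Nat.mul_le_mul (le_refl p) (by omega)
      _ = m * p := Nat.mul_comm p m⟩
  invFun i := (⟨i.val / p, by
      have := i.isLt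
      rw [Nat.div_lt_iff_lt_mul hp]; omega⟩,
    ⟨i.val % p, Nat.mod_lt _ hp⟩)
  left_inv x := by
    ext
    · simp [Nat.mul_add_div hp, Nat.div_eq_of_lt x.2.isLt]
    · simp [Nat.mul_add_mod, Nat.mod_eq_of_lt x.2.isLt]
  right_inv i := Fin.ext (Nat.div_add_mod i.val p)

/-- `sigmaMap` as an additive group homomorphism. -/
def sigmaHom (p m q : ℕ) : (Fin (m * p) → ZMod q) →+ (Fin m → ZMod q) where
  toFun := sigmaMap p m q
  map_zero' := by ext j; simp [sigmaMap]
  map_add' a b := by ext j; simp [sigmaMap, Finset.sum_add_distrib]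

/-- Summation as an additive group homomorphism. -/
def sumHom (n q : ℕ) : (Fin n → ZMod q) →+ ZMod q where
  toFun a := ∑ i, a i
  map_zero' := by simp
  map_add' a b := by simp [Finset.sum_add_distrib]

lemma sum_sigmaMap (p m q : ℕ) (hp : 0 < p) (a : Fin (m * p) → ZMod q) :
    ∑ j, sigmaMap p m q a j = ∑ i, a i := by
  rw [← Equiv.sum_comp (blockEquiv m p hp) a, Fintype.sum_prod_type]
  rfl

/-- A section of `sigmaMap`: put `s j` at the first position of block `j`. -/
def liftMap (p m q : ℕ) (hp : 0 < p) (s : Fin m → ZMod q) : Fin (m * p) → ZMod q :=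
  fun i => if i.val % p = 0 then
    s ⟨i.val / p, by have := i.isLt; rw [Nat.div_lt_iff_lt_mul hp]; omega⟩ else 0

lemma sigmaMap_liftMap (p m q : ℕ) (hp : 0 < p) (s : Fin m → ZMod q) :
    sigmaMap p m q (liftMap p m q hp s) = s := by
  funext j
  show (∑ t : Fin p, liftMap p m q hp s ⟨p * j.val + t.val, _⟩) = s j
  rw [Finset.sum_eq_single (⟨0, hp⟩ : Fin p)]
  · simp [liftMap, Nat.mul_add_mod, Nat.mul_div_cancel_left _ hp]
  · intro t _ ht
    have ht' : (p * j.val + t.val) % p ≠ 0 := by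
      rw [Nat.mul_add_mod, Nat.mod_eq_of_lt t.isLt]
      exact fun h => ht (Fin.ext h)
    simp [liftMap, ht']
    intro h; rw [Nat.mod_eq_of_lt t.isLt] at h; exact absurd (Fin.ext h) ht
  · intro h; exact absurd (Finset.mem_univ _) h

/-- Let `p` be a prime, `q = p^e` (`e ≥ 1`), `m ≥ 1` and `n = m·p`.
If `Λ ⊆ X_n(q) = {a : ∑ aᵢ = 0}` generates `X_n(q)` as an abelian group, then the
set `Σ(Λ) \ p·X_m(q)` generates `X_m(q)` as an abelian group. -/
theorem stmt_8 (p e q m : ℕ) (hp : p.Prime) (he : 1 ≤ e) (hq : q = p ^ e)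
    (hm : 0 < m)
    (Λ : Set (Fin (m * p) → ZMod q))
    (hΛsub : ∀ a ∈ Λ, ∑ i, a i = 0)
    (hΛgen : (AddSubgroup.closure Λ : Set (Fin (m * p) → ZMod q)) =
      {a : Fin (m * p) → ZMod q | ∑ i, a i = 0}) :
    (AddSubgroup.closure ((sigmaMap p m q '' Λ) \
        {s : Fin m → ZMod q | ∃ t : Fin m → ZMod q, (∑ j, t j = 0) ∧ s = p • t}) :
      Set (Fin m → ZMod q)) = {s : Fin m → ZMod q | ∑ j, s j = 0} := by
  have hp0 : 0 < p := hp.pos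
  set Xn : AddSubgroup (Fin (m * p) → ZMod q) := (sumHom (m * p) q).ker with hXn
  set Xm : AddSubgroup (Fin m → ZMod q) := (sumHom m q).ker with hXm
  have hXnmem : ∀ a : Fin (m * p) → ZMod q, a ∈ Xn ↔ ∑ i, a i = 0 := fun a => Iff.rfl
  have hXmmem : ∀ s : Fin m → ZMod q, s ∈ Xm ↔ ∑ j, s j = 0 := fun s => Iff.rfl
  have hclΛ : AddSubgroup.closure Λ = Xn := by
    apply SetLike.coe_injective
    rw [hΛgen]; rfl
  -- closure of the full image is Xm
  have hmapXn : Xn.map (sigmaHom p m q) = Xm := by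
    ext s
    constructor
    · rintro ⟨a, ha, rfl⟩
      rw [hXmmem]
      show ∑ j, sigmaMap p m q a j = 0
      rw [sum_sigmaMap p m q hp0 a]
      exact ha
    · intro hs
      refine ⟨liftMap p m q hp0 s, ?_, sigmaMap_liftMap p m q hp0 s⟩
      rw [SetLike.mem_coe, hXnmem, ← sum_sigmaMap p m q hp0, sigmaMap_liftMap p m q hp0 s]
      exact hs
  have hclim : AddSubgroup.closure (sigmaMap p m q '' Λ) = Xm := by
    rw [show sigmaMap p m q '' Λ = ⇑(sigmaHom p m q) '' Λ from rfl,
      ← AddMonoidHom.map_closure, hclΛ, hmapXn]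
  set H : AddSubgroup (Fin m → ZMod q) := AddSubgroup.closure
    ((sigmaMap p m q '' Λ) \
      {s : Fin m → ZMod q | ∃ t : Fin m → ZMod q, (∑ j, t j = 0) ∧ s = p • t}) with hH
  set K : AddSubgroup (Fin m → ZMod q) := Xm.map (zsmulAddGroupHom (p : ℤ)) with hK
  have hHle : H ≤ Xm := by
    rw [hH]
    apply (AddSubgroup.closure_le _).2
    rintro s ⟨⟨a, ha, rfl⟩, -⟩
    rw [SetLike.mem_coe, hXmmem]
    show ∑ j, sigmaMap p m q a j = 0
    rw [sum_sigmaMap p m q hp0 a]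
    exact hΛsub a ha
  have hsup : Xm ≤ H ⊔ K := by
    rw [← hclim]
    apply (AddSubgroup.closure_le _).2
    intro s hs
    by_cases hsP : s ∈ {s : Fin m → ZMod q | ∃ t : Fin m → ZMod q, (∑ j, t j = 0) ∧ s = p • t}
    · obtain ⟨t, ht, rfl⟩ := hsP
      have h1 : (p : ℤ) • t ∈ K := AddSubgroup.mem_map.2
        ⟨t, (hXmmem t).2 ht, by simp [zsmulAddGroupHom]⟩
      have h2 : p • t ∈ K := by rwa [natCast_zsmul] at h1
      exact SetLike.mem_coe.2 (SetLike.le_def.1 le_sup_right h2)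
    · refine SetLike.mem_coe.2 (SetLike.le_def.1 le_sup_left ?_)
      rw [hH]
      exact AddSubgroup.subset_closure (Set.mem_diff_of_mem hs hsP)
  -- key step: every s ∈ Xm is h + p • t with h ∈ H, t ∈ Xm
  have key1 : ∀ s ∈ Xm, ∃ h ∈ H, ∃ t ∈ Xm, s = h + p • t := by
    intro s hs
    obtain ⟨h, hh, k, hk, hhk⟩ := AddSubgroup.mem_sup.1 (hsup hs)
    obtain ⟨t, ht, rfl⟩ := hk
    exact ⟨h, hh, t, ht, by rw [← hhk]; simp [zsmulAddGroupHom, natCast_zsmul]⟩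
  have key2 : ∀ k : ℕ, ∀ s ∈ Xm, ∃ h ∈ H, ∃ t ∈ Xm, s = h + p ^ k • t := by
    intro k
    induction k with
    | zero => intro s hs; exact ⟨0, H.zero_mem, s, hs, by simp⟩
    | succ k ih =>
      intro s hs
      obtain ⟨h, hh, t, ht, rfl⟩ := ih s hs
      obtain ⟨h', hh', t', ht', rfl⟩ := key1 t ht
      refine ⟨h + p ^ k • h', H.add_mem hh (H.nsmul_mem hh' _), t', ht', ?_⟩
      rw [smul_add, add_assoc, smul_smul, pow_succ]
  have hXmle : Xm ≤ H := by
    intro s hs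
    obtain ⟨h, hh, t, ht, rfl⟩ := key2 e s hs
    have : p ^ e • t = 0 := by
      funext j
      show p ^ e • t j = 0
      rw [nsmul_eq_mul, ← hq]
      simp [ZMod.natCast_self]
    rw [this, add_zero]
    exact hh
  have : H = Xm := le_antisymm hHle hXmle
  rw [← hH] at *
  rw [this]
  rfl
end

section
/- Let n ≥ 2 and let B be a nonempty proper subset of {1, …, n}. Then the set Λ = {a_{α,β} : α ∈ B, β ∉ B} generates L_n as an abelian group, and |Λ| = |B|·(n − |B|). -/
/-- The vector `a_{i,j} ∈ ℤ^n` with entry `1` in position `i`, entry `-1` in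
position `j`, and `0` elsewhere. -/
def stdVec {n : ℕ} (i j : Fin n) : Fin n → ℤ :=
  fun h => if h = i then 1 else if h = j then -1 else 0

lemma stdVec_mem_closure {n : ℕ} {B : Finset (Fin n)} {Λ : Set (Fin n → ℤ)}
    (hΛ : Λ = {v | ∃ α β : Fin n, α ∈ B ∧ β ∉ B ∧ v = stdVec α β})
    {α₀ β₀ : Fin n} (hα₀ : α₀ ∈ B) (hβ₀ : β₀ ∉ B)
    (i j : Fin n) (hij : i ≠ j) : stdVec i j ∈ AddSubgroup.closure Λ := by
  have base : ∀ α β, α ∈ B → β ∉ B → stdVec α β ∈ AddSubgroup.closure Λ := by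
    intro α β h1 h2
    exact AddSubgroup.subset_closure (by rw [hΛ]; exact ⟨α, β, h1, h2, rfl⟩)
  by_cases hi : i ∈ B <;> by_cases hj : j ∈ B
  · have hiβ : i ≠ β₀ := fun h => hβ₀ (h ▸ hi)
    have hjβ : j ≠ β₀ := fun h => hβ₀ (h ▸ hj)
    have heq : stdVec i j = stdVec i β₀ - stdVec j β₀ := by
      funext h; simp only [stdVec, Pi.sub_apply]
      split_ifs <;> simp_all
    rw [heq]; exact sub_mem (base _ _ hi hβ₀) (base _ _ hj hβ₀)
  · exact base _ _ hi hj
  · have heq : stdVec i j = -stdVec j i := by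
      funext h; simp only [stdVec, Pi.neg_apply]
      split_ifs <;> simp_all
    rw [heq]; exact neg_mem (base _ _ hj hi)
  · have hαi : α₀ ≠ i := fun h => hi (h ▸ hα₀)
    have hαj : α₀ ≠ j := fun h => hj (h ▸ hα₀)
    have heq : stdVec i j = stdVec α₀ j - stdVec α₀ i := by
      funext h; simp only [stdVec, Pi.sub_apply]
      split_ifs <;> simp_all
    rw [heq]; exact sub_mem (base _ _ hα₀ hj) (base _ _ hα₀ hi)

/-- Let `n ≥ 2` and let `B` be a nonempty proper subset of `{1,…,n}`.
Then the set `Λ = {a_{α,β} : α ∈ B, β ∉ B}` generates the lattice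
`L_n = {a ∈ ℤ^n : ∑ aᵢ = 0}` as an abelian group, and `|Λ| = |B|·(n - |B|)`. -/
theorem stmt_9 (n : ℕ) (hn : 2 ≤ n) (B : Finset (Fin n))
    (hB1 : B.Nonempty) (hB2 : B ≠ Finset.univ)
    (Λ : Set (Fin n → ℤ))
    (hΛ : Λ = {v | ∃ α β : Fin n, α ∈ B ∧ β ∉ B ∧ v = stdVec α β}) :
    (AddSubgroup.closure Λ : Set (Fin n → ℤ)) = {a : Fin n → ℤ | ∑ i, a i = 0} ∧
    Λ.ncard = B.card * (n - B.card) := by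
  obtain ⟨α₀, hα₀⟩ := hB1
  obtain ⟨β₀, hβ₀⟩ : ∃ x, x ∉ B := by
    by_contra h
    push_neg at h
    exact hB2 (Finset.eq_univ_iff_forall.mpr h)
  have hαβ : α₀ ≠ β₀ := fun h => hβ₀ (h ▸ hα₀)
  constructor
  · apply le_antisymm
    · -- closure ≤ lattice
      have : AddSubgroup.closure Λ ≤
          { carrier := {a : Fin n → ℤ | ∑ i, a i = 0}
            add_mem' := by
              intro a b ha hb
              simp only [Set.mem_setOf_eq, Pi.add_apply] at *
              simp [Finset.sum_add_distrib, ha, hb]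
            zero_mem' := by simp
            neg_mem' := by
              intro a ha
              simp only [Set.mem_setOf_eq, Pi.neg_apply] at *
              simp [Finset.sum_neg_distrib, ha] } := by
        rw [AddSubgroup.closure_le]
        intro v hv
        rw [hΛ] at hv
        obtain ⟨α, β, h1, h2, rfl⟩ := hv
        have hne : α ≠ β := fun h => h2 (h ▸ h1)
        show ∑ h, stdVec α β h = 0
        have : ∀ h, stdVec α β h = (if h = α then (1:ℤ) else 0) + (if h = β then -1 else 0) := by
          intro h
          simp only [stdVec]
          split_ifs with h1' h2' <;> simp_all
        simp only [this, Finset.sum_add_distrib, Finset.sum_ite_eq', Finset.mem_univ, if_true]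
        ring
      exact this
    · -- lattice ⊆ closure
      intro a ha
      simp only [Set.mem_setOf_eq] at ha
      have key : a = ∑ i ∈ Finset.univ.erase β₀, a i • stdVec i β₀ := by
        funext h
        rw [Finset.sum_apply]
        by_cases hh : h = β₀
        · subst hh
          have h1 : ∀ i ∈ Finset.univ.erase h, (a i • stdVec i h) h = -a i := by
            intro i hi
            have : h ≠ i := Ne.symm (Finset.ne_of_mem_erase hi)
            simp [stdVec, this, Pi.smul_apply]
          rw [Finset.sum_congr rfl h1, Finset.sum_neg_distrib]
          have h2 := Finset.sum_erase_add Finset.univ a (Finset.mem_univ h)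
          rw [ha] at h2
          omega
        · rw [Finset.sum_eq_single h]
          · simp [stdVec, Pi.smul_apply]
          · intro b _ hb
            have : h ≠ b := Ne.symm hb
            simp [stdVec, this, hh, Pi.smul_apply]
          · intro habs
            exact absurd (Finset.mem_erase.mpr ⟨hh, Finset.mem_univ h⟩) habs
      rw [key]
      apply AddSubgroup.sum_mem
      intro i hi
      exact AddSubgroup.zsmul_mem _
        (stdVec_mem_closure hΛ hα₀ hβ₀ i β₀ (Finset.ne_of_mem_erase hi)) _
  · -- cardinality
    have hΛeq : Λ = ↑((B ×ˢ Bᶜ).image fun p : Fin n × Fin n => stdVec p.1 p.2) := by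
      rw [hΛ]
      ext v
      simp only [Finset.coe_image, Set.mem_image, Finset.mem_coe, Finset.mem_product,
        Finset.mem_compl, Set.mem_setOf_eq]
      constructor
      · rintro ⟨α, β, h1, h2, rfl⟩; exact ⟨(α, β), ⟨h1, h2⟩, rfl⟩
      · rintro ⟨⟨α, β⟩, ⟨h1, h2⟩, rfl⟩; exact ⟨α, β, h1, h2, rfl⟩
    rw [hΛeq, Set.ncard_coe_finset]
    rw [Finset.card_image_of_injOn, Finset.card_product, Finset.card_compl,
      Fintype.card_fin]
    rintro ⟨α, β⟩ hab ⟨α', β'⟩ hab' heq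
    simp only [Finset.mem_coe, Finset.mem_product, Finset.mem_compl] at hab hab'
    have hne : α ≠ β := fun h => hab.2 (h ▸ hab.1)
    have hne' : α' ≠ β' := fun h => hab'.2 (h ▸ hab'.1)
    have h2 : α = α' := by
      by_contra hc
      have h := congrFun heq α
      simp only [stdVec] at h
      split_ifs at h <;> simp_all
    subst h2
    have h3 : β = β' := by
      by_contra hc
      have h := congrFun heq β
      simp only [stdVec] at h
      split_ifs at h <;> simp_all
    subst h3
    rfl
end
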